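/- arXiv:0709.1034 — 2 statements merged into one kernel-verified Lean document; each statement's English description precedes it below -/
import Mathlib

section
/- Let m > 0, b > 0 and s ∈ {−1, +1}, and for z ∈ ℝ³ \ {0} define E_s(z) := −(1/√π) ∫₀^∞ τ^{−1/2} · (d/dτ)[ e^{−τm²} e^{sbτ} N_b(τ,z) ] dτ. Then there exists a constant C > 0 (depending on m and b) such that |E_s(z)| ≤ C / |z|⁴ for all z ≠ 0. -/
open Real MeasureTheory

section Helpers
open Set Filter Topology

lemma my_exp_integral {k : ℝ} (hk : 0 < k) :
    IntegrableOn (fun x : ℝ => Real.exp (-k * x)) (Ioi 0) ∧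
    (∫ x : ℝ in Ioi 0, Real.exp (-k * x)) = 1 / k := by
  have hd : ∀ x ∈ Ici (0:ℝ), HasDerivAt (fun y : ℝ => -Real.exp (-k * y) / k)
      (Real.exp (-k * x)) x := by
    intro x _
    have := (((hasDerivAt_id x).const_mul k).neg.exp).neg.div_const k
    simpa [hk.ne', mul_comm, mul_div_assoc] using this
  have ht : Tendsto (fun y : ℝ => -Real.exp (-k * y) / k) atTop (𝓝 (-0 / k)) := by
    refine Tendsto.div_const (Tendsto.neg ?_) _
    exact Real.tendsto_exp_atBot.comp (tendsto_id.const_mul_atTop_of_neg (by linarith))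
  constructor
  · exact integrableOn_Ioi_deriv_of_nonneg' hd (fun x _ => (Real.exp_pos _).le) ht
  · rw [integral_Ioi_of_hasDerivAt_of_nonneg' hd (fun x _ => (Real.exp_pos _).le) ht]
    simp [hk.ne']
    ring


lemma my_exp_bound1 {x : ℝ} (hx : 0 ≤ x) : x * Real.exp (-x) ≤ 1 := by
  have h := Real.add_one_le_exp x
  have h2 : Real.exp (-x) * Real.exp x = 1 := by rw [← Real.exp_add]; simp
  nlinarith [Real.exp_pos (-x), Real.exp_pos x]

lemma my_exp_bound2 {x : ℝ} (hx : 0 ≤ x) : x ^ 2 * Real.exp (-x) ≤ 4 := by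
  have h := Real.add_one_le_exp (x/2)
  have h2 : Real.exp (x/2) * Real.exp (x/2) = Real.exp x := by rw [← Real.exp_add]; ring_nf
  have h3 : Real.exp (-x) * Real.exp x = 1 := by rw [← Real.exp_add]; simp
  nlinarith [Real.exp_pos (-x), Real.exp_pos x, Real.exp_pos (x/2)]

lemma my_sinh_le {x : ℝ} (hx : 0 ≤ x) : Real.sinh x ≤ x * Real.cosh x := by
  have hmono : Monotone (fun y : ℝ => y * Real.cosh y - Real.sinh y) := by
    have hdiff : Differentiable ℝ (fun y : ℝ => y * Real.cosh y - Real.sinh y) :=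
      (differentiable_id.mul Real.differentiable_cosh).sub Real.differentiable_sinh
    refine monotone_of_deriv_nonneg hdiff ?_
    intro y
    have hd : HasDerivAt (fun y : ℝ => y * Real.cosh y - Real.sinh y)
        (1 * Real.cosh y + y * Real.sinh y - Real.cosh y) y :=
      ((hasDerivAt_id y).mul (Real.hasDerivAt_cosh y)).sub (Real.hasDerivAt_sinh y)
    rw [hd.deriv]
    have : 0 ≤ y * Real.sinh y := by
      rcases le_or_gt 0 y with h | h
      · exact mul_nonneg h (by rwa [Real.sinh_nonneg_iff])
      · exact mul_nonneg_iff.mpr (Or.inr ⟨h.le, by rw [Real.sinh_nonpos_iff]; exact h.le⟩)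
    linarith
  have := hmono hx
  simpa [Real.sinh_zero, Real.cosh_zero] using this

lemma my_exp_le_sinh {x : ℝ} (hx : 0 < x) : Real.exp x ≤ (2 + 1/x) * Real.sinh x := by
  have hs : Real.sinh x = (Real.exp x - Real.exp (-x)) / 2 := Real.sinh_eq x
  have h1 : Real.exp (-x) * Real.exp x = 1 := by rw [← Real.exp_add]; simp
  have h2 : 2 * x + 1 ≤ Real.exp x * Real.exp x := by
    have h3 := Real.add_one_le_exp (2 * x)
    have he : Real.exp (2 * x) = Real.exp x * Real.exp x := by rw [← Real.exp_add]; ring_nf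
    linarith [he ▸ h3]
  rw [hs, ← sub_nonneg]
  have he2 : (2 + 1/x) * ((Real.exp x - Real.exp (-x)) / 2) - Real.exp x
      = (Real.exp x * Real.exp x - (2*x+1) * (Real.exp (-x) * Real.exp x))
          / (2 * x * Real.exp x) := by
    field_simp
    ring
  rw [he2, h1]
  have hE := Real.exp_pos x
  apply div_nonneg _ (by positivity)
  linarith


lemma my_ftc3 {c : ℝ} (hc : 0 < c) :
    IntegrableOn (fun τ : ℝ => Real.exp (-c/τ) / τ^3) (Ioi 0) ∧
    (∫ τ : ℝ in Ioi 0, Real.exp (-c/τ) / τ^3) = 1/c^2 := by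
  set F : ℝ → ℝ := fun τ => if τ ≤ 0 then 0 else Real.exp (-c/τ) * (1/(c*τ) + 1/c^2) with hF
  have hFval : ∀ τ : ℝ, 0 < τ → F τ = Real.exp (-c/τ) * (1/(c*τ) + 1/c^2) := by
    intro τ hτ; simp [hF, not_le.mpr hτ]
  have hderiv : ∀ τ ∈ Ioi (0:ℝ), HasDerivAt F (Real.exp (-c/τ) / τ^3) τ := by
    intro τ hτ
    rw [mem_Ioi] at hτ
    have h1 : HasDerivAt (fun σ : ℝ => -c/σ) (c/τ^2) τ := by
      have h := (hasDerivAt_inv hτ.ne').const_mul (-c)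
      have heq : (fun σ : ℝ => -c * σ⁻¹) = fun σ : ℝ => -c/σ := by funext σ; ring
      rw [heq] at h
      refine h.congr_deriv (Eq.symm ?_)
      field_simp
    have h2 : HasDerivAt (fun σ : ℝ => Real.exp (-c/σ)) (Real.exp (-c/τ) * (c/τ^2)) τ := h1.exp
    have h3 : HasDerivAt (fun σ : ℝ => 1/(c*σ) + 1/c^2) (-(1/(c*τ^2))) τ := by
      have h := ((hasDerivAt_inv hτ.ne').const_mul (1/c)).add_const (1/c^2)
      have heq : (fun σ : ℝ => 1/c * σ⁻¹ + 1/c^2) = fun σ : ℝ => 1/(c*σ) + 1/c^2 := by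
        funext σ; rw [one_div (c*σ), mul_inv]; ring
      rw [heq] at h
      refine h.congr_deriv (Eq.symm ?_)
      field_simp
    have h4 := h2.mul h3
    have heq : (fun σ : ℝ => Real.exp (-c/σ) * (1/(c*σ) + 1/c^2)) =ᶠ[𝓝 τ] F := by
      filter_upwards [Ioi_mem_nhds hτ] with σ hσ
      rw [hFval σ hσ]
    refine HasDerivAt.congr_of_eventuallyEq ?_ heq.symm
    refine h4.congr_deriv (Eq.symm ?_)
    field_simp
    ring
  have hnonneg : ∀ τ ∈ Ioi (0:ℝ), 0 ≤ Real.exp (-c/τ) / τ^3 := by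
    intro τ hτ; rw [mem_Ioi] at hτ; positivity
  have htop : Tendsto F atTop (𝓝 (1/c^2)) := by
    have h1 : Tendsto (fun τ : ℝ => -c/τ) atTop (𝓝 0) := by
      have := tendsto_inv_atTop_zero (𝕜 := ℝ)
      have h := this.const_mul (-c)
      rw [mul_zero] at h
      refine h.congr fun τ => by ring
    have h2 : Tendsto (fun τ : ℝ => Real.exp (-c/τ)) atTop (𝓝 1) := by
      have := (Real.continuous_exp.tendsto 0).comp h1
      simpa [Function.comp_def] using this
    have h3 : Tendsto (fun τ : ℝ => 1/(c*τ) + 1/c^2) atTop (𝓝 (0 + 1/c^2)) := by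
      refine Tendsto.add_const _ ?_
      have := tendsto_inv_atTop_zero (𝕜 := ℝ)
      have h := this.const_mul (1/c)
      rw [mul_zero] at h
      refine h.congr fun τ => ?_
      rw [one_div (c*τ), mul_inv]; ring
    have h4 := h2.mul h3
    rw [one_mul, zero_add] at h4
    refine h4.congr' ?_
    filter_upwards [eventually_gt_atTop (0:ℝ)] with τ hτ
    rw [hFval τ hτ]
  have hcont : ContinuousWithinAt F (Ici (0:ℝ)) 0 := by
    have hF0 : F 0 = 0 := by simp [hF]
    rw [ContinuousWithinAt, hF0]
    have hsplit : Ici (0:ℝ) = {0} ∪ Ioi 0 := by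
      ext x; simp [le_iff_lt_or_eq, mem_Ioi, or_comm, eq_comm]
    rw [hsplit, nhdsWithin_union]
    rw [tendsto_sup]
    constructor
    · rw [nhdsWithin_singleton]
      simpa [hF0] using tendsto_pure_nhds F 0
    · -- along 𝓝[>] 0 : compose with inversion
      have hexp0 : Tendsto (fun x : ℝ => Real.exp (-c*x)) atTop (𝓝 0) :=
        Real.tendsto_exp_atBot.comp (tendsto_id.const_mul_atTop_of_neg (by linarith))
      have h1 : Tendsto (fun x : ℝ => Real.exp (-c*x) * (x/c + 1/c^2)) atTop (𝓝 0) := by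
        have ha : Tendsto (fun x : ℝ => x * Real.exp (-c*x)) atTop (𝓝 0) := by
          have := tendsto_rpow_mul_exp_neg_mul_atTop_nhds_zero 1 c hc
          refine this.congr fun x => by rw [Real.rpow_one]
        have hb2 := (ha.const_mul (1/c)).add (hexp0.const_mul (1/c^2))
        rw [mul_zero, mul_zero, add_zero] at hb2
        refine hb2.congr fun x => by ring
      have hinv : Tendsto (fun τ : ℝ => τ⁻¹) (𝓝[>] (0:ℝ)) atTop := tendsto_inv_nhdsGT_zero
      have h2 := h1.comp hinv
      refine h2.congr' ?_
      filter_upwards [self_mem_nhdsWithin] with τ hτ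
      rw [mem_Ioi] at hτ
      rw [Function.comp_apply, hFval τ hτ]
      have e1 : -c/τ = -c * τ⁻¹ := by ring
      have e2 : 1/(c*τ) = τ⁻¹/c := by rw [one_div, mul_inv]; ring
      rw [e1, e2]
  constructor
  · exact integrableOn_Ioi_deriv_of_nonneg hcont hderiv hnonneg htop
  · rw [integral_Ioi_of_hasDerivAt_of_nonneg hcont hderiv hnonneg htop]
    simp [hF]

end Helpers

/-- The hyperbolic cotangent `coth z = cosh z / sinh z`. -/
noncomputable def coth (z : ℝ) : ℝ := Real.cosh z / Real.sinh z

/-- The phase-free Mehler heat kernel `N_b(τ,z)` for a constant magnetic field of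
strength `b`. -/
noncomputable def mehlerN (b τ : ℝ) (z : EuclideanSpace ℝ (Fin 3)) : ℝ :=
  (4 * π * τ) ^ (-(1 : ℝ) / 2) * (b / (4 * π * Real.sinh (b * τ))) *
    Real.exp (-(z 2) ^ 2 / (4 * τ)) *
    Real.exp (-(b / 4) * coth (b * τ) * ((z 0) ^ 2 + (z 1) ^ 2))

/-- The kernel `E_s(z) = -(1/√π) ∫₀^∞ τ^{-1/2} (d/dτ)[e^{-τm²} e^{sbτ} N_b(τ,z)] dτ` of the
pseudorelativistic kinetic energy operator `E_A = |α(p - eA) + βm|` (up to a phase). -/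
noncomputable def kinKernel (m b s : ℝ) (z : EuclideanSpace ℝ (Fin 3)) : ℝ :=
  -(1 / Real.sqrt π) * ∫ τ in Set.Ioi (0 : ℝ),
    τ ^ (-(1 : ℝ) / 2) *
      deriv (fun σ : ℝ => Real.exp (-σ * m ^ 2) * Real.exp (s * b * σ) * mehlerN b σ z) τ

open Set Filter Topology

set_option maxHeartbeats 2000000

/-- Let `m > 0`, `b > 0` and `s ∈ {-1, +1}`. Then there exists a constant `C > 0`
(depending on `m` and `b`) such that `|E_s(z)| ≤ C / |z|⁴` for all `z ≠ 0`. -/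
theorem kinKernel_bound (m b : ℝ) (hm : 0 < m) (hb : 0 < b)
    (s : ℝ) (hs : s = -1 ∨ s = 1) :
    ∃ C : ℝ, 0 < C ∧ ∀ z : EuclideanSpace ℝ (Fin 3), z ≠ 0 →
      |kinKernel m b s z| ≤ C / ‖z‖ ^ 4 := by
  have hπ0 : 0 < π := Real.pi_pos
  set c₀' : ℝ := (4*π) ^ (-(1:ℝ)/2) * (b/(4*π)) with hc₀def'
  have hc₀' : 0 < c₀' := by
    have h1 : (0:ℝ) < (4*π) ^ (-(1:ℝ)/2) := Real.rpow_pos_of_pos (by positivity) _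
    positivity
  set c₁' : ℝ := |s*b - m^2| + 2*b with hc₁def'
  have hcc₁ : 0 < c₁' := by positivity
  refine ⟨(c₀' * (2*c₁' + 7 + c₁'/b + 4/b)) * (2*(256 * (1 + 2/m^2))/m^2 + 256), by positivity, ?_⟩
  intro z hz
  suffices h : |kinKernel m b s z| ≤
      ((c₀' * (2*c₁' + 7 + c₁'/b + 4/b)) * (2*(256 * (1 + 2/m^2))/m^2 + 256)) / ‖z‖^4 by
    exact h
  have hπ : 0 < π := Real.pi_pos
  set c₀ : ℝ := (4*π) ^ (-(1:ℝ)/2) * (b/(4*π)) with hc₀def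
  have hc₀ : 0 < c₀ := by
    have h1 : (0:ℝ) < (4*π) ^ (-(1:ℝ)/2) := Real.rpow_pos_of_pos (by positivity) _
    positivity
  set w : ℝ := (z 2)^2 with hwdef
  set r : ℝ := (z 0)^2 + (z 1)^2 with hrdef
  set U : ℝ → ℝ := fun σ =>
    (s*b - m^2)*σ - w/(4*σ) - b/4 * (Real.cosh (b*σ)/Real.sinh (b*σ)) * r with hUdef
  -- Step A : congruence on Ioi 0
  have hcongr : ∀ τ : ℝ, 0 < τ →
      (fun σ : ℝ => Real.exp (-σ * m ^ 2) * Real.exp (s * b * σ) * mehlerN b σ z) =ᶠ[𝓝 τ]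
      (fun σ : ℝ => c₀ * (σ ^ (-(1:ℝ)/2) * (Real.sinh (b*σ))⁻¹ * Real.exp (U σ))) := by
    intro τ hτ
    filter_upwards [Ioi_mem_nhds hτ] with σ hσ
    rw [mem_Ioi] at hσ
    have hSσ : 0 < Real.sinh (b*σ) := by rw [Real.sinh_pos_iff]; positivity
    have hrpow : (4 * π * σ) ^ (-(1:ℝ)/2) = (4*π) ^ (-(1:ℝ)/2) * σ ^ (-(1:ℝ)/2) :=
      Real.mul_rpow (by positivity) hσ.le
    have hexp : Real.exp (-σ * m ^ 2) * Real.exp (s * b * σ) *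
        (Real.exp (-(z 2) ^ 2 / (4 * σ)) *
          Real.exp (-(b / 4) * (Real.cosh (b*σ)/Real.sinh (b*σ)) * ((z 0) ^ 2 + (z 1) ^ 2)))
        = Real.exp (U σ) := by
      rw [← Real.exp_add, ← Real.exp_add, ← Real.exp_add]
      congr 1
      rw [hUdef]
      simp only [hwdef, hrdef]
      ring
    simp only [mehlerN, coth, hrpow]
    rw [← hexp]
    have hsplit : b / (4 * π * Real.sinh (b*σ)) = b/(4*π) * (Real.sinh (b*σ))⁻¹ := by
      rw [div_mul_eq_div_div, div_eq_mul_inv]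
    rw [hsplit, hc₀def]
    ring
  -- Step B : derivative of the clean form
  have hderiv : ∀ τ : ℝ, 0 < τ →
      HasDerivAt (fun σ : ℝ => c₀ * (σ ^ (-(1:ℝ)/2) * (Real.sinh (b*σ))⁻¹ * Real.exp (U σ)))
        (c₀ * (τ ^ (-(1:ℝ)/2) * (Real.sinh (b*τ))⁻¹ * Real.exp (U τ) *
          ((s*b - m^2) + w/(4*τ^2) + (b^2*r/4)/(Real.sinh (b*τ))^2
            - 1/(2*τ) - b * (Real.cosh (b*τ)/Real.sinh (b*τ))))) τ := by
    intro τ hτ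
    have hS : 0 < Real.sinh (b*τ) := by rw [Real.sinh_pos_iff]; positivity
    have hbσ : HasDerivAt (fun σ : ℝ => b * σ) b τ := by
      simpa using (hasDerivAt_id τ).const_mul b
    have hsinh : HasDerivAt (fun σ : ℝ => Real.sinh (b*σ)) (Real.cosh (b*τ) * b) τ := hbσ.sinh
    have hcosh : HasDerivAt (fun σ : ℝ => Real.cosh (b*σ)) (Real.sinh (b*τ) * b) τ := hbσ.cosh
    -- derivative of coth (b σ)
    have hdiv : HasDerivAt (fun σ : ℝ => Real.cosh (b*σ) / Real.sinh (b*σ))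
        (-(b/(Real.sinh (b*τ))^2)) τ := by
      have h := hcosh.div hsinh hS.ne'
      refine h.congr_deriv (Eq.symm ?_)
      have hid : Real.cosh (b*τ)^2 - Real.sinh (b*τ)^2 = 1 := Real.cosh_sq_sub_sinh_sq (b*τ)
      have hSne := hS.ne'
      field_simp
      linear_combination hid
    -- derivative of U
    have hU : HasDerivAt U ((s*b - m^2) + w/(4*τ^2) + (b^2*r/4)/(Real.sinh (b*τ))^2) τ := by
      have h1 : HasDerivAt (fun σ : ℝ => (s*b - m^2)*σ) (s*b - m^2) τ := by
        simpa using (hasDerivAt_id τ).const_mul (s*b - m^2)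
      have h2 : HasDerivAt (fun σ : ℝ => w/(4*σ)) (-(w/(4*τ^2))) τ := by
        have h := (hasDerivAt_inv hτ.ne').const_mul (w/4)
        have heq : (fun σ : ℝ => w/4 * σ⁻¹) = fun σ : ℝ => w/(4*σ) := by
          funext σ; ring
        rw [heq] at h
        refine h.congr_deriv (Eq.symm ?_)
        field_simp
      have h3 : HasDerivAt (fun σ : ℝ => b/4 * (Real.cosh (b*σ)/Real.sinh (b*σ)) * r)
          (-(b^2*r/4)/(Real.sinh (b*τ))^2) τ := by
        have h := (hdiv.const_mul (b/4)).mul_const r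
        refine h.congr_deriv (Eq.symm ?_)
        rw [div_eq_mul_inv, div_eq_mul_inv]
        ring
      have h := (h1.sub h2).sub h3
      refine h.congr_deriv (Eq.symm ?_)
      field_simp
      ring
    have hexp : HasDerivAt (fun σ : ℝ => Real.exp (U σ))
        (Real.exp (U τ) * ((s*b - m^2) + w/(4*τ^2) + (b^2*r/4)/(Real.sinh (b*τ))^2)) τ := hU.exp
    have hrpow : HasDerivAt (fun σ : ℝ => σ ^ (-(1:ℝ)/2))
        ((-(1:ℝ)/2) * τ ^ ((-(1:ℝ)/2) - 1)) τ := Real.hasDerivAt_rpow_const (Or.inl hτ.ne')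
    have hsinhinv : HasDerivAt (fun σ : ℝ => (Real.sinh (b*σ))⁻¹)
        (-(Real.cosh (b*τ) * b) / (Real.sinh (b*τ))^2) τ := hsinh.inv hS.ne'
    have h := ((hrpow.mul hsinhinv).mul hexp).const_mul c₀
    refine h.congr_deriv (Eq.symm ?_)
    have hpow1 : τ ^ ((-(1:ℝ)/2) - 1) = τ ^ (-(1:ℝ)/2) * τ⁻¹ := by
      rw [Real.rpow_sub hτ, Real.rpow_one, div_eq_mul_inv]
    rw [hpow1, Pi.mul_apply]
    have hτne := hτ.ne'
    have hSne := hS.ne'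
    field_simp
    ring
  set c₁ : ℝ := |s*b - m^2| + 2*b with hc₁def
  have hc₁ : 0 < c₁ := by positivity
  set A : ℝ := c₀ * (2*c₁ + 7 + c₁/b + 4/b) with hAdef
  have hA : 0 < A := by positivity
  set K : ℝ := 256 * (1 + 2/m^2) with hKdef
  have hK : 0 < K := by positivity
  set a : ℝ := r + w with hadef
  have hw : 0 ≤ w := sq_nonneg _
  have hr : 0 ≤ r := by rw [hrdef]; positivity
  have hnormsq : ‖z‖^2 = a := by
    rw [EuclideanSpace.norm_eq, Real.sq_sqrt (by positivity), Fin.sum_univ_three]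
    simp only [Real.norm_eq_abs, sq_abs, hadef, hwdef, hrdef]
    try ring
  have ha : 0 < a := by
    have h1 : 0 < ‖z‖ := norm_pos_iff.mpr hz
    have h2 : 0 < ‖z‖^2 := by positivity
    rwa [hnormsq] at h2
  -- Step C : pointwise bound
  have key : ∀ τ : ℝ, 0 < τ →
      |τ ^ (-(1:ℝ)/2) *
        deriv (fun σ : ℝ => Real.exp (-σ * m ^ 2) * Real.exp (s * b * σ) * mehlerN b σ z) τ|
      ≤ A * ((K/a^2) * Real.exp (-(m^2/2) * τ) + Real.exp (-(a/16)/τ) / τ^3) := by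
    intro τ hτ
    have hS : 0 < Real.sinh (b*τ) := by rw [Real.sinh_pos_iff]; positivity
    have hch : 0 < Real.cosh (b*τ) := Real.cosh_pos _
    have hP : 0 < τ ^ (-(1:ℝ)/2) := Real.rpow_pos_of_pos hτ _
    have hE : 0 < Real.exp (U τ) := Real.exp_pos _
    have hbτ : 0 < b * τ := by positivity
    set S := Real.sinh (b*τ)
    set ch := Real.cosh (b*τ)
    set P := τ ^ (-(1:ℝ)/2) with hPdef
    set E := Real.exp (U τ) with hEdef
    set L : ℝ := (s*b - m^2) + w/(4*τ^2) + (b^2*r/4)/S^2 - 1/(2*τ) - b * (ch/S) with hLdef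
    have hderiv_eq : deriv (fun σ : ℝ =>
        Real.exp (-σ * m ^ 2) * Real.exp (s * b * σ) * mehlerN b σ z) τ
        = c₀ * (P * S⁻¹ * E * L) := by
      rw [(hcongr τ hτ).deriv_eq]
      exact (hderiv τ hτ).deriv
    rw [hderiv_eq]
    have hPP : P * P = 1/τ := by
      rw [hPdef, ← Real.rpow_add hτ]
      norm_num [Real.rpow_neg_one, one_div]
    have hstep0 : P * (c₀ * (P * S⁻¹ * E * L)) = c₀ * (1/τ) * (S⁻¹ * E) * L := by
      rw [← hPP]; ring
    rw [hstep0, abs_mul, abs_of_pos (show (0:ℝ) < c₀ * (1/τ) * (S⁻¹ * E) by positivity)]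
    -- bound on |L|
    have hbτS : b * τ < S := by
      rw [show S = Real.sinh (b*τ) from rfl]
      exact Real.self_lt_sinh_iff.mpr hbτ
    have hchS : ch/S ≤ 2 + 1/(b*τ) := by
      have h1 : ch ≤ Real.exp (b*τ) := by
        have := Real.cosh_eq (b*τ)
        have h2 : Real.exp (-(b*τ)) ≤ Real.exp (b*τ) := by
          apply Real.exp_le_exp.mpr; linarith
        rw [show ch = Real.cosh (b*τ) from rfl, this]
        linarith
      have h2 := my_exp_le_sinh hbτ
      rw [div_le_iff₀ hS]
      calc ch ≤ Real.exp (b*τ) := h1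
        _ ≤ (2 + 1/(b*τ)) * S := h2
    have hinvS : (1:ℝ)/(b*τ) ≤ ch/S := by
      have h1 : S ≤ (b*τ) * ch := my_sinh_le hbτ.le
      rw [div_le_div_iff₀ hbτ hS]
      have e := mul_comm (b*τ) ch
      linarith
    have hS2 : (b^2*r/4)/S^2 ≤ (r/4)/τ^2 := by
      have h1 : (b*τ)^2 ≤ S^2 := by
        have := pow_le_pow_left₀ hbτ.le hbτS.le 2
        linarith
      have h2 : (b^2*r/4)/S^2 ≤ (b^2*r/4)/(b*τ)^2 := by
        apply div_le_div_of_nonneg_left (by positivity) (by positivity) h1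
      calc (b^2*r/4)/S^2 ≤ (b^2*r/4)/(b*τ)^2 := h2
        _ = (r/4)/τ^2 := by field_simp
    have hL : |L| ≤ c₁ + (3/2)/τ + (a/4)/τ^2 := by
      have e1 : w/(4*τ^2) + (r/4)/τ^2 = (a/4)/τ^2 := by rw [hadef]; field_simp; ring
      have e2 : b * (1/(b*τ)) = 1/τ := by field_simp
      have habs1 := le_abs_self (s*b - m^2)
      have habs2 := neg_abs_le (s*b - m^2)
      have hw4 : (0:ℝ) ≤ w/(4*τ^2) := by positivity
      have hb2 : (0:ℝ) ≤ (b^2*r/4)/S^2 := by positivity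
      have h12 : (0:ℝ) < 1/(2*τ) := by positivity
      have hchS' : b * (ch/S) ≤ 2*b + 1/τ := by
        have := mul_le_mul_of_nonneg_left hchS hb.le
        calc b * (ch/S) ≤ b * (2 + 1/(b*τ)) := this
          _ = 2*b + 1/τ := by field_simp
      have hchS'' : 0 < b * (ch/S) := by positivity
      have hra : (0:ℝ) ≤ (r/4)/τ^2 := by positivity
      have e3 : 1/(2*τ) = (1/2)*(1/τ) := by ring
      have e4 : (3/2)/τ = (3/2)*(1/τ) := by ring
      have ht0 : (0:ℝ) < 1/τ := by positivity
      rw [hLdef, hc₁def, abs_le]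
      constructor
      · linarith only [neg_abs_le (s*b - m^2), hw4, hb2, hchS', e1, hra, e3, e4, ht0, hc₁]
      · linarith only [le_abs_self (s*b - m^2), hw4, hb2, hchS'', hS2, e1, hra, e3, e4, ht0, hb]
    -- C3 : bound on S⁻¹ * E
    have hUτ : U τ = (s*b - m^2)*τ - w/(4*τ) - b/4 * (ch/S) * r := by rw [hUdef]
    have hU_le : U τ ≤ (s*b - m^2)*τ - (a/4)/τ := by
      have h2 : b/4 * (1/(b*τ)) * r ≤ b/4 * (ch/S) * r := by
        apply mul_le_mul_of_nonneg_right _ hr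
        exact mul_le_mul_of_nonneg_left hinvS (by positivity)
      have e : b/4 * (1/(b*τ)) * r = (r/4)/τ := by field_simp
      have e2 : w/(4*τ) + (r/4)/τ = (a/4)/τ := by rw [hadef]; field_simp; ring
      rw [hUτ]
      linarith only [h2, e, e2]
    have hEle : E ≤ Real.exp (b*τ) * (Real.exp (-m^2*τ) * Real.exp (-(a/4)/τ)) := by
      have h1 : E ≤ Real.exp ((s*b - m^2)*τ - (a/4)/τ) := by
        rw [hEdef]; exact Real.exp_le_exp.mpr hU_le
      have h2 : Real.exp ((s*b - m^2)*τ - (a/4)/τ)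
          = Real.exp (s*b*τ) * (Real.exp (-m^2*τ) * Real.exp (-(a/4)/τ)) := by
        rw [← Real.exp_add, ← Real.exp_add]; congr 1; ring
      have h3 : Real.exp (s*b*τ) ≤ Real.exp (b*τ) := by
        apply Real.exp_le_exp.mpr
        rcases hs with h|h <;> rw [h] <;> nlinarith only [hb, hτ]
      have h4 : (0:ℝ) ≤ Real.exp (-m^2*τ) * Real.exp (-(a/4)/τ) := by positivity
      calc E ≤ Real.exp ((s*b - m^2)*τ - (a/4)/τ) := h1
        _ = Real.exp (s*b*τ) * (Real.exp (-m^2*τ) * Real.exp (-(a/4)/τ)) := h2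
        _ ≤ Real.exp (b*τ) * (Real.exp (-m^2*τ) * Real.exp (-(a/4)/τ)) :=
            mul_le_mul_of_nonneg_right h3 h4
    have hSE : S⁻¹ * E ≤ (2 + 1/(b*τ)) * (Real.exp (-m^2*τ) * Real.exp (-(a/4)/τ)) := by
      have h1 : S⁻¹ * E ≤ S⁻¹ * (Real.exp (b*τ) * (Real.exp (-m^2*τ) * Real.exp (-(a/4)/τ))) :=
        mul_le_mul_of_nonneg_left hEle (by positivity)
      have h2 : S⁻¹ * Real.exp (b*τ) ≤ 2 + 1/(b*τ) := by
        rw [inv_mul_le_iff₀ hS]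
        calc Real.exp (b*τ) ≤ (2 + 1/(b*τ)) * S := my_exp_le_sinh hbτ
          _ = S * (2 + 1/(b*τ)) := by ring
      have h4 : (0:ℝ) ≤ Real.exp (-m^2*τ) * Real.exp (-(a/4)/τ) := by positivity
      calc S⁻¹ * E ≤ S⁻¹ * (Real.exp (b*τ) * (Real.exp (-m^2*τ) * Real.exp (-(a/4)/τ))) := h1
        _ = (S⁻¹ * Real.exp (b*τ)) * (Real.exp (-m^2*τ) * Real.exp (-(a/4)/τ)) := by ring
        _ ≤ (2 + 1/(b*τ)) * (Real.exp (-m^2*τ) * Real.exp (-(a/4)/τ)) :=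
            mul_le_mul_of_nonneg_right h2 h4
    -- C4
    have step2 : Real.exp (-(a/4)/τ) * (c₁ + (3/2)/τ + (a/4)/τ^2)
        ≤ Real.exp (-(a/8)/τ) * (c₁ + (7/2)/τ) := by
      have h8 : Real.exp (-(a/4)/τ) = Real.exp (-(a/8)/τ) * Real.exp (-(a/8)/τ) := by
        rw [← Real.exp_add]; congr 1; ring
      have hee : -((a/8)/τ) = -(a/8)/τ := by ring
      have hxe : (a/8)/τ * Real.exp (-(a/8)/τ) ≤ 1 := by
        have := my_exp_bound1 (show (0:ℝ) ≤ (a/8)/τ by positivity)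
        rwa [hee] at this
      have he1 : Real.exp (-(a/8)/τ) ≤ 1 := by
        rw [← Real.exp_zero]
        apply Real.exp_le_exp.mpr
        have h0 : (0:ℝ) < (a/8)/τ := by positivity
        rw [neg_div]
        linarith only [h0]
      have hterm : (a/4)/τ^2 * Real.exp (-(a/8)/τ) ≤ 2/τ := by
        have e : (a/4)/τ^2 = (2/τ) * ((a/8)/τ) := by field_simp; ring
        rw [e, mul_assoc]
        calc (2/τ) * ((a/8)/τ * Real.exp (-(a/8)/τ)) ≤ (2/τ) * 1 :=
            mul_le_mul_of_nonneg_left hxe (by positivity)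
          _ = 2/τ := mul_one _
      have hcpos : (0:ℝ) ≤ c₁ + (3/2)/τ := by positivity
      have k1 : Real.exp (-(a/8)/τ) * (c₁ + (3/2)/τ) ≤ c₁ + (3/2)/τ :=
        mul_le_of_le_one_left hcpos he1
      rw [h8]
      have e6 : Real.exp (-(a/8)/τ) * Real.exp (-(a/8)/τ) * (c₁ + (3/2)/τ + (a/4)/τ^2)
          = Real.exp (-(a/8)/τ) * (Real.exp (-(a/8)/τ) * (c₁ + (3/2)/τ)
              + (a/4)/τ^2 * Real.exp (-(a/8)/τ)) := by ring
      rw [e6]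
      apply mul_le_mul_of_nonneg_left _ (Real.exp_nonneg _)
      have e5 : (3/2)/τ + 2/τ = (7/2)/τ := by ring
      linarith only [k1, hterm, e5]
    -- C5
    have step3 : c₀ * ((1/τ) * (2 + 1/(b*τ)) * (c₁ + (7/2)/τ))
        ≤ A * (1/τ + 1/τ^2 + 1/τ^3) := by
      have inner : (1/τ) * (2 + 1/(b*τ)) * (c₁ + (7/2)/τ)
          ≤ (2*c₁+7+c₁/b+4/b) * (1/τ + 1/τ^2 + 1/τ^3) := by
        have key5 : (2*c₁+7+c₁/b+4/b)*(1/τ+1/τ^2+1/τ^3)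
            - (1/τ)*(2+1/(b*τ))*(c₁+(7/2)/τ)
            = (7+c₁/b+4/b)*(1/τ) + (2*c₁+4/b)*(1/τ^2) + (2*c₁+7+c₁/b+1/(2*b))*(1/τ^3) := by
          field_simp
          ring
        have p1 : (0:ℝ) ≤ (7+c₁/b+4/b)*(1/τ) := by positivity
        have p2 : (0:ℝ) ≤ (2*c₁+4/b)*(1/τ^2) := by positivity
        have p3 : (0:ℝ) ≤ (2*c₁+7+c₁/b+1/(2*b))*(1/τ^3) := by positivity
        linarith only [key5, p1, p2, p3]
      calc c₀ * ((1/τ) * (2 + 1/(b*τ)) * (c₁ + (7/2)/τ))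
          ≤ c₀ * ((2*c₁+7+c₁/b+4/b) * (1/τ + 1/τ^2 + 1/τ^3)) :=
            mul_le_mul_of_nonneg_left inner hc₀.le
        _ = A * (1/τ + 1/τ^2 + 1/τ^3) := by rw [hAdef]; ring
    -- C6
    have step4 : (1/τ + 1/τ^2 + 1/τ^3) * (Real.exp (-m^2*τ) * Real.exp (-(a/8)/τ))
        ≤ (K/a^2) * Real.exp (-(m^2/2)*τ) + Real.exp (-(a/16)/τ)/τ^3 := by
      have hq : Real.exp (-(a/8)/τ) ≤ 256/a^2 * τ^2 := by
        have hx : (0:ℝ) < (a/8)/τ := by positivity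
        have h := my_exp_bound2 hx.le
        have hee : -((a/8)/τ) = -(a/8)/τ := by ring
        rw [hee] at h
        have h2 : Real.exp (-(a/8)/τ) ≤ 4/((a/8)/τ)^2 := by
          rw [le_div_iff₀ (by positivity)]
          linarith only [h]
        calc Real.exp (-(a/8)/τ) ≤ 4/((a/8)/τ)^2 := h2
          _ = 256/a^2 * τ^2 := by field_simp; ring
      have hm1 : Real.exp (-m^2*τ) = Real.exp (-(m^2/2)*τ) * Real.exp (-(m^2/2)*τ) := by
        rw [← Real.exp_add]; congr 1; ring
      have hm2 : τ * Real.exp (-(m^2/2)*τ) ≤ 2/m^2 := by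
        have := my_exp_bound1 (show (0:ℝ) ≤ (m^2/2)*τ by positivity)
        have hee : -((m^2/2)*τ) = -(m^2/2)*τ := by ring
        rw [hee] at this
        calc τ * Real.exp (-(m^2/2)*τ) = (2/m^2) * ((m^2/2)*τ * Real.exp (-(m^2/2)*τ)) := by
              field_simp
          _ ≤ (2/m^2) * 1 := mul_le_mul_of_nonneg_left this (by positivity)
          _ = 2/m^2 := mul_one _
      have hm3 : Real.exp (-(m^2/2)*τ) ≤ 1 := by
        rw [← Real.exp_zero]; apply Real.exp_le_exp.mpr; nlinarith only [hm, hτ]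
      have hm0 : Real.exp (-m^2*τ) ≤ 1 := by
        rw [← Real.exp_zero]; apply Real.exp_le_exp.mpr; nlinarith only [hm, hτ]
      have T1 : (1/τ) * (Real.exp (-m^2*τ) * Real.exp (-(a/8)/τ))
          ≤ (256/a^2) * (2/m^2) * Real.exp (-(m^2/2)*τ) := by
        calc (1/τ) * (Real.exp (-m^2*τ) * Real.exp (-(a/8)/τ))
            ≤ (1/τ) * (Real.exp (-m^2*τ) * (256/a^2 * τ^2)) := by
              apply mul_le_mul_of_nonneg_left _ (by positivity)
              exact mul_le_mul_of_nonneg_left hq (Real.exp_nonneg _)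
          _ = (256/a^2) * ((τ * Real.exp (-(m^2/2)*τ)) * Real.exp (-(m^2/2)*τ)) := by
              rw [hm1]; field_simp
          _ ≤ (256/a^2) * ((2/m^2) * Real.exp (-(m^2/2)*τ)) := by
              apply mul_le_mul_of_nonneg_left _ (by positivity)
              exact mul_le_mul_of_nonneg_right hm2 (Real.exp_nonneg _)
          _ = (256/a^2) * (2/m^2) * Real.exp (-(m^2/2)*τ) := by ring
      have T2 : (1/τ^2) * (Real.exp (-m^2*τ) * Real.exp (-(a/8)/τ))
          ≤ (256/a^2) * Real.exp (-(m^2/2)*τ) := by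
        calc (1/τ^2) * (Real.exp (-m^2*τ) * Real.exp (-(a/8)/τ))
            ≤ (1/τ^2) * (Real.exp (-m^2*τ) * (256/a^2 * τ^2)) := by
              apply mul_le_mul_of_nonneg_left _ (by positivity)
              exact mul_le_mul_of_nonneg_left hq (Real.exp_nonneg _)
          _ = (256/a^2) * (Real.exp (-(m^2/2)*τ) * Real.exp (-(m^2/2)*τ)) := by
              rw [hm1]; field_simp
          _ ≤ (256/a^2) * (1 * Real.exp (-(m^2/2)*τ)) := by
              apply mul_le_mul_of_nonneg_left _ (by positivity)
              exact mul_le_mul_of_nonneg_right hm3 (Real.exp_nonneg _)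
          _ = (256/a^2) * Real.exp (-(m^2/2)*τ) := by ring
      have T3 : (1/τ^3) * (Real.exp (-m^2*τ) * Real.exp (-(a/8)/τ))
          ≤ Real.exp (-(a/16)/τ)/τ^3 := by
        have h16 : Real.exp (-(a/8)/τ) ≤ Real.exp (-(a/16)/τ) := by
          apply Real.exp_le_exp.mpr
          rw [neg_div, neg_div]
          apply neg_le_neg
          exact (div_le_div_iff_of_pos_right hτ).mpr (by nlinarith only [ha, hr, hw])
        calc (1/τ^3) * (Real.exp (-m^2*τ) * Real.exp (-(a/8)/τ))
            ≤ (1/τ^3) * (1 * Real.exp (-(a/16)/τ)) := by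
              apply mul_le_mul_of_nonneg_left _ (by positivity)
              exact mul_le_mul hm0 h16 (Real.exp_nonneg _) zero_le_one
          _ = Real.exp (-(a/16)/τ)/τ^3 := by ring
      have eK : (256/a^2) * (2/m^2) * Real.exp (-(m^2/2)*τ) + (256/a^2) * Real.exp (-(m^2/2)*τ)
          = (K/a^2) * Real.exp (-(m^2/2)*τ) := by
        rw [hKdef]; field_simp; ring
      have edist : (1/τ + 1/τ^2 + 1/τ^3) * (Real.exp (-m^2*τ) * Real.exp (-(a/8)/τ))
          = (1/τ) * (Real.exp (-m^2*τ) * Real.exp (-(a/8)/τ))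
            + (1/τ^2) * (Real.exp (-m^2*τ) * Real.exp (-(a/8)/τ))
            + (1/τ^3) * (Real.exp (-m^2*τ) * Real.exp (-(a/8)/τ)) := by ring
      rw [edist]
      linarith only [T1, T2, T3, eK]
    -- assembly
    calc c₀ * (1/τ) * (S⁻¹ * E) * |L|
        ≤ (c₀ * (1/τ) * ((2 + 1/(b*τ)) * (Real.exp (-m^2*τ) * Real.exp (-(a/4)/τ))))
            * (c₁ + (3/2)/τ + (a/4)/τ^2) := by
          apply mul_le_mul _ hL (abs_nonneg _) (by positivity)
          exact mul_le_mul_of_nonneg_left hSE (by positivity)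
      _ = (c₀ * (1/τ) * (2 + 1/(b*τ)) * Real.exp (-m^2*τ))
            * (Real.exp (-(a/4)/τ) * (c₁ + (3/2)/τ + (a/4)/τ^2)) := by ring
      _ ≤ (c₀ * (1/τ) * (2 + 1/(b*τ)) * Real.exp (-m^2*τ))
            * (Real.exp (-(a/8)/τ) * (c₁ + (7/2)/τ)) := by
          exact mul_le_mul_of_nonneg_left step2 (by positivity)
      _ = (c₀ * ((1/τ) * (2 + 1/(b*τ)) * (c₁ + (7/2)/τ)))
            * (Real.exp (-m^2*τ) * Real.exp (-(a/8)/τ)) := by ring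
      _ ≤ (A * (1/τ + 1/τ^2 + 1/τ^3)) * (Real.exp (-m^2*τ) * Real.exp (-(a/8)/τ)) := by
          exact mul_le_mul_of_nonneg_right step3 (by positivity)
      _ = A * ((1/τ + 1/τ^2 + 1/τ^3) * (Real.exp (-m^2*τ) * Real.exp (-(a/8)/τ))) := by ring
      _ ≤ A * ((K/a^2) * Real.exp (-(m^2/2) * τ) + Real.exp (-(a/16)/τ) / τ^3) :=
          mul_le_mul_of_nonneg_left step4 hA.le
  -- the dominating function and its integral
  have hint1 := my_exp_integral (show (0:ℝ) < m^2/2 by positivity)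
  have hint2 := my_ftc3 (show (0:ℝ) < a/16 by positivity)
  set G : ℝ → ℝ := fun τ =>
    A * ((K/a^2) * Real.exp (-(m^2/2) * τ) + Real.exp (-(a/16)/τ) / τ^3) with hGdef
  have hGint : IntegrableOn G (Set.Ioi 0) :=
    (((hint1.1.const_mul (K/a^2)).add hint2.1).const_mul A :)
  have hGval : ∫ τ in Set.Ioi (0:ℝ), G τ = (A * (2*K/m^2 + 256)) / a^2 := by
    rw [hGdef]
    simp only []
    rw [MeasureTheory.integral_const_mul _ _,
      MeasureTheory.integral_add (hint1.1.const_mul (K/a^2)) hint2.1,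
      MeasureTheory.integral_const_mul _ _, hint1.2, hint2.2]
    field_simp
    ring
  -- bound the integral
  have hIle : |∫ τ in Set.Ioi (0:ℝ), τ ^ (-(1:ℝ)/2) *
      deriv (fun σ : ℝ => Real.exp (-σ * m ^ 2) * Real.exp (s * b * σ) * mehlerN b σ z) τ|
      ≤ (A * (2*K/m^2 + 256)) / a^2 := by
    rw [← hGval, ← Real.norm_eq_abs]
    apply MeasureTheory.norm_integral_le_of_norm_le hGint
    refine (ae_restrict_iff' measurableSet_Ioi).mpr (Filter.Eventually.of_forall ?_)
    intro τ hτ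
    rw [Set.mem_Ioi] at hτ
    rw [Real.norm_eq_abs]
    exact key τ hτ
  -- finish
  have hsqrtπ : 1 ≤ Real.sqrt π := by
    rw [show (1:ℝ) = Real.sqrt 1 by simp]
    exact Real.sqrt_le_sqrt (by linarith [Real.pi_gt_three])
  have hfrac : 1/Real.sqrt π ≤ 1 := by
    rw [div_le_one (by positivity)]
    exact hsqrtπ
  have hnorm4 : ‖z‖^4 = a^2 := by
    rw [show (‖z‖:ℝ)^4 = (‖z‖^2)^2 by ring, hnormsq]
  rw [kinKernel, hnorm4, abs_mul, abs_neg, abs_of_pos (show (0:ℝ) < 1/Real.sqrt π by positivity)]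
  calc (1/Real.sqrt π) * |∫ τ in Set.Ioi (0:ℝ), τ ^ (-(1:ℝ)/2) *
        deriv (fun σ : ℝ => Real.exp (-σ * m ^ 2) * Real.exp (s * b * σ) * mehlerN b σ z) τ|
      ≤ 1 * ((A * (2*K/m^2 + 256)) / a^2) :=
        mul_le_mul hfrac hIle (abs_nonneg _) zero_le_one
    _ = (A * (2*K/m^2 + 256)) / a^2 := one_mul _
end

section
/- Let K : ℝ³ × ℝ³ → ℂ be measurable with |K(x,y)| ≤ c₀/|x − y|³ for all x ≠ y, let g₀ : ℝ³ → ℝ be Lipschitz continuous with Lipschitz constant c₁, let R > 1, and set g(x) := g₀(x/R). Then there is a constant c, depending only on c₀ and c₁ (not on R), such that for all ψ ∈ L²(ℝ³) and all φ ∈ C_c^∞(ℝ³): | ∫_{ℝ³} ∫_{ℝ³} conj(ψ(x)) · K(x,y) · (g(y) − g(x)) · (1/|y|) · φ(y) dy dx | ≤ (c/R) · ‖ψ‖₂ · ‖φ‖₂. -/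
open Real MeasureTheory

open ENNReal Metric Set

local notation "E3" => EuclideanSpace ℝ (Fin 3)

lemma ofReal_norm_eq_coe_nnnorm {F : Type*} [SeminormedAddGroup F] (a : F) :
    ENNReal.ofReal ‖a‖ = (‖a‖₊ : ℝ≥0∞) := ofReal_norm a

noncomputable def ccV3 : ℝ≥0∞ := volume (Metric.ball (0 : E3) 1)

lemma ccV3_ne_top : ccV3 ≠ ⊤ := measure_ball_lt_top.ne

lemma cc_volume_closedBall (x : E3) {r : ℝ} (hr : 0 ≤ r) :
    volume (Metric.closedBall x r) = ENNReal.ofReal (r ^ (3 : ℝ)) * ccV3 := by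
  rw [MeasureTheory.Measure.addHaar_closedBall volume x hr, ccV3]
  congr 2
  rw [finrank_euclideanSpace_fin, ← Real.rpow_natCast r 3]
  norm_num

lemma cc_annulus_bound {p ρ : ℝ} (hp : 0 ≤ p) (hρ : 0 < ρ) :
    ∫⁻ y in Metric.closedBall (0 : E3) (2 * ρ) \ Metric.ball (0 : E3) ρ,
        (‖y‖₊ : ℝ≥0∞) ^ (-p) ≤ ENNReal.ofReal (8 * ρ ^ (3 - p)) * ccV3 := by
  have hb : ∀ y ∈ Metric.closedBall (0 : E3) (2 * ρ) \ Metric.ball (0 : E3) ρ,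
      (‖y‖₊ : ℝ≥0∞) ^ (-p) ≤ ENNReal.ofReal (ρ ^ (-p)) := by
    intro y hy
    have h1 : ρ ≤ ‖y‖ := by
      have := hy.2
      simp only [Metric.mem_ball, dist_zero_right, not_lt] at this
      exact this
    rw [← ENNReal.ofReal_rpow_of_pos hρ, ← ofReal_norm_eq_coe_nnnorm,
      ENNReal.rpow_neg, ENNReal.rpow_neg]
    exact ENNReal.inv_le_inv.2 (ENNReal.rpow_le_rpow (ENNReal.ofReal_le_ofReal h1) hp)
  calc ∫⁻ y in Metric.closedBall (0 : E3) (2 * ρ) \ Metric.ball (0 : E3) ρ,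
        (‖y‖₊ : ℝ≥0∞) ^ (-p)
      ≤ ∫⁻ _ in Metric.closedBall (0 : E3) (2 * ρ) \ Metric.ball (0 : E3) ρ,
        ENNReal.ofReal (ρ ^ (-p)) := setLIntegral_mono measurable_const hb
    _ = ENNReal.ofReal (ρ ^ (-p)) *
        volume (Metric.closedBall (0 : E3) (2 * ρ) \ Metric.ball (0 : E3) ρ) :=
        setLIntegral_const _ _
    _ ≤ ENNReal.ofReal (ρ ^ (-p)) * volume (Metric.closedBall (0 : E3) (2 * ρ)) :=
        mul_le_mul_right (measure_mono diff_subset) _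
    _ = ENNReal.ofReal (ρ ^ (-p)) * (ENNReal.ofReal ((2 * ρ) ^ (3 : ℝ)) * ccV3) := by
        rw [cc_volume_closedBall _ (by positivity)]
    _ = ENNReal.ofReal (8 * ρ ^ (3 - p)) * ccV3 := by
        rw [← mul_assoc, ← ENNReal.ofReal_mul (by positivity)]
        congr 2
        rw [Real.mul_rpow (by norm_num) hρ.le]
        rw [show ((2 : ℝ) ^ (3 : ℝ)) = 8 by
          rw [show (3 : ℝ) = ((3 : ℕ) : ℝ) by norm_num, Real.rpow_natCast]; norm_num]
        rw [show (3 : ℝ) - p = -p + 3 by ring, Real.rpow_add hρ]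
        ring

lemma cc_lint_ball {p : ℝ} (hp0 : 0 ≤ p) (hp3 : p < 3) :
    ∃ C : ℝ≥0∞, C ≠ ⊤ ∧ ∀ r : ℝ, 0 < r →
      ∫⁻ y in Metric.closedBall (0 : E3) r, (‖y‖₊ : ℝ≥0∞) ^ (-p) ≤
        C * ENNReal.ofReal (r ^ (3 - p)) := by
  set x : ℝ≥0∞ := ENNReal.ofReal (2 ^ (p - 3)) with hxdef
  have hx1 : x < 1 :=
    ENNReal.ofReal_lt_one.2 (Real.rpow_lt_one_of_one_lt_of_neg one_lt_two (by linarith))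
  refine ⟨ENNReal.ofReal 8 * (1 - x)⁻¹ * ccV3, ?_, ?_⟩
  · exact ENNReal.mul_ne_top
      (ENNReal.mul_ne_top ENNReal.ofReal_ne_top
        (ENNReal.inv_ne_top.2 (tsub_pos_of_lt hx1).ne')) ccV3_ne_top
  intro r hr
  set ρ : ℕ → ℝ := fun n => r / 2 * 2 ^ (-(n : ℝ)) with hρdef
  have hρpos : ∀ n : ℕ, 0 < ρ n := by
    intro n
    have := Real.rpow_pos_of_pos (two_pos (α := ℝ)) (-(n : ℝ))
    positivity
  have hcov : Metric.closedBall (0 : E3) r \ {0} ⊆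
      ⋃ n : ℕ, (Metric.closedBall (0 : E3) (2 * ρ n) \ Metric.ball (0 : E3) (ρ n)) := by
    rintro y ⟨hy1, hy2⟩
    have hy0 : (0 : ℝ) < ‖y‖ := norm_pos_iff.2 (by simpa using hy2)
    have hyr : ‖y‖ ≤ r := by simpa [dist_zero_right] using hy1
    set t := r / ‖y‖ with ht
    have ht1 : 1 ≤ t := (one_le_div hy0).2 hyr
    have ht0 : 0 < t := lt_of_lt_of_le one_pos ht1
    set n := ⌊Real.logb 2 t⌋₊ with hn
    have h1 : (2 : ℝ) ^ (n : ℝ) ≤ t :=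
      (Real.le_logb_iff_rpow_le one_lt_two ht0).1 (Nat.floor_le (Real.logb_nonneg one_lt_two ht1))
    have h2 : t < (2 : ℝ) ^ ((n : ℝ) + 1) := by
      refine (Real.logb_lt_iff_lt_rpow one_lt_two ht0).1 ?_
      exact_mod_cast Nat.lt_floor_add_one (Real.logb 2 t)
    have h2pos : (0 : ℝ) < 2 ^ (n : ℝ) := Real.rpow_pos_of_pos two_pos _
    have h2pos' : (0 : ℝ) < 2 ^ ((n : ℝ) + 1) := Real.rpow_pos_of_pos two_pos _
    have hρeq : ρ n = r / 2 ^ ((n : ℝ) + 1) := by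
      rw [hρdef]
      simp only []
      rw [Real.rpow_add two_pos, Real.rpow_one, Real.rpow_neg two_pos.le]
      field_simp
    refine mem_iUnion.2 ⟨n, ?_, ?_⟩
    · rw [Metric.mem_closedBall, dist_zero_right]
      have h2ρ : 2 * ρ n = r / 2 ^ (n : ℝ) := by
        rw [hρeq, Real.rpow_add two_pos, Real.rpow_one]
        field_simp
      rw [h2ρ, le_div_iff₀ h2pos]
      calc ‖y‖ * 2 ^ (n : ℝ) ≤ ‖y‖ * t := by
            exact mul_le_mul_of_nonneg_left h1 hy0.le
        _ = r := by rw [ht]; field_simp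
    · rw [Metric.mem_ball, dist_zero_right, not_lt, hρeq, div_le_iff₀ h2pos']
      rw [ht, div_lt_iff₀ hy0] at h2
      linarith
  calc ∫⁻ y in Metric.closedBall (0 : E3) r, (‖y‖₊ : ℝ≥0∞) ^ (-p)
      = ∫⁻ y in Metric.closedBall (0 : E3) r \ {0}, (‖y‖₊ : ℝ≥0∞) ^ (-p) :=
        (setLIntegral_congr (MeasureTheory.diff_ae_eq_self.2
          (measure_mono_null inter_subset_right (measure_singleton 0)))).symm
    _ ≤ ∫⁻ y in ⋃ n : ℕ, (Metric.closedBall (0 : E3) (2 * ρ n) \ Metric.ball (0 : E3) (ρ n)),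
          (‖y‖₊ : ℝ≥0∞) ^ (-p) := lintegral_mono_set hcov
    _ ≤ ∑' n : ℕ, ∫⁻ y in Metric.closedBall (0 : E3) (2 * ρ n) \ Metric.ball (0 : E3) (ρ n),
          (‖y‖₊ : ℝ≥0∞) ^ (-p) := lintegral_iUnion_le _ _
    _ ≤ ∑' n : ℕ, (ENNReal.ofReal (8 * r ^ (3 - p)) * ccV3) * x ^ n := by
        refine ENNReal.tsum_le_tsum fun n => le_trans (cc_annulus_bound hp0 (hρpos n)) ?_
        rw [show (ENNReal.ofReal (8 * r ^ (3 - p)) * ccV3) * x ^ n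
            = (ENNReal.ofReal (8 * r ^ (3 - p)) * x ^ n) * ccV3 by ring]
        refine mul_le_mul_left ?_ ccV3
        have hterm : (8 : ℝ) * (ρ n) ^ (3 - p) ≤ 8 * r ^ (3 - p) * (2 ^ (p - 3)) ^ n := by
          have hρn : (ρ n) ^ (3 - p) = (r / 2) ^ (3 - p) * (2 ^ (p - 3)) ^ n := by
            rw [hρdef]
            simp only []
            rw [Real.mul_rpow (by positivity) (Real.rpow_pos_of_pos two_pos _).le,
              ← Real.rpow_natCast ((2:ℝ) ^ (p - 3)) n, ← Real.rpow_mul two_pos.le,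
              ← Real.rpow_mul two_pos.le]
            ring_nf
          rw [hρn]
          have h1 : (r / 2) ^ (3 - p) ≤ r ^ (3 - p) :=
            Real.rpow_le_rpow (by positivity) (by linarith) (by linarith)
          have h2 : (0:ℝ) ≤ (2 ^ (p - 3)) ^ n := by positivity
          nlinarith [Real.rpow_nonneg (show (0:ℝ) ≤ r/2 by positivity) (3-p)]
        calc ENNReal.ofReal (8 * (ρ n) ^ (3 - p))
            ≤ ENNReal.ofReal (8 * r ^ (3 - p) * (2 ^ (p - 3)) ^ n) :=
              ENNReal.ofReal_le_ofReal hterm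
          _ = ENNReal.ofReal (8 * r ^ (3 - p)) * x ^ n := by
              rw [ENNReal.ofReal_mul (by positivity), hxdef,
                ENNReal.ofReal_pow (by positivity)]
    _ = (ENNReal.ofReal (8 * r ^ (3 - p)) * ccV3) * (1 - x)⁻¹ := by
        rw [ENNReal.tsum_mul_left, ENNReal.tsum_geometric]
    _ = ENNReal.ofReal 8 * (1 - x)⁻¹ * ccV3 * ENNReal.ofReal (r ^ (3 - p)) := by
        rw [ENNReal.ofReal_mul (by norm_num)]
        ring

lemma cc_lint_compl {q : ℝ} (hq : 3 < q) :
    ∃ C : ℝ≥0∞, C ≠ ⊤ ∧ ∀ r : ℝ, 0 < r →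
      ∫⁻ y in (Metric.closedBall (0 : E3) r)ᶜ, (‖y‖₊ : ℝ≥0∞) ^ (-q) ≤
        C * ENNReal.ofReal (r ^ (3 - q)) := by
  set x : ℝ≥0∞ := ENNReal.ofReal (2 ^ (3 - q)) with hxdef
  have hx1 : x < 1 :=
    ENNReal.ofReal_lt_one.2 (Real.rpow_lt_one_of_one_lt_of_neg one_lt_two (by linarith))
  refine ⟨ENNReal.ofReal 8 * (1 - x)⁻¹ * ccV3, ?_, ?_⟩
  · exact ENNReal.mul_ne_top
      (ENNReal.mul_ne_top ENNReal.ofReal_ne_top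
        (ENNReal.inv_ne_top.2 (tsub_pos_of_lt hx1).ne')) ccV3_ne_top
  intro r hr
  set ρ : ℕ → ℝ := fun n => r * 2 ^ (n : ℝ) with hρdef
  have hρpos : ∀ n : ℕ, 0 < ρ n := by
    intro n
    have := Real.rpow_pos_of_pos (two_pos (α := ℝ)) ((n : ℝ))
    positivity
  have hcov : (Metric.closedBall (0 : E3) r)ᶜ ⊆
      ⋃ n : ℕ, (Metric.closedBall (0 : E3) (2 * ρ n) \ Metric.ball (0 : E3) (ρ n)) := by
    intro y hy
    have hyr : r < ‖y‖ := by
      simp only [mem_compl_iff, Metric.mem_closedBall, dist_zero_right, not_le] at hy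
      exact hy
    have hy0 : (0 : ℝ) < ‖y‖ := lt_trans hr hyr
    set t := ‖y‖ / r with ht
    have ht1 : 1 ≤ t := le_of_lt ((one_lt_div hr).2 hyr)
    have ht0 : 0 < t := lt_of_lt_of_le one_pos ht1
    set n := ⌊Real.logb 2 t⌋₊ with hn
    have h1 : (2 : ℝ) ^ (n : ℝ) ≤ t :=
      (Real.le_logb_iff_rpow_le one_lt_two ht0).1 (Nat.floor_le (Real.logb_nonneg one_lt_two ht1))
    have h2 : t < (2 : ℝ) ^ ((n : ℝ) + 1) := by
      refine (Real.logb_lt_iff_lt_rpow one_lt_two ht0).1 ?_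
      exact_mod_cast Nat.lt_floor_add_one (Real.logb 2 t)
    refine mem_iUnion.2 ⟨n, ?_, ?_⟩
    · rw [Metric.mem_closedBall, dist_zero_right]
      have h2ρ : 2 * ρ n = r * 2 ^ ((n : ℝ) + 1) := by
        rw [hρdef]
        simp only []
        rw [Real.rpow_add two_pos, Real.rpow_one]
        ring
      rw [h2ρ]
      rw [ht, div_lt_iff₀ hr] at h2
      linarith
    · rw [Metric.mem_ball, dist_zero_right, not_lt, hρdef]
      simp only []
      rw [ht, le_div_iff₀ hr] at h1
      linarith
  calc ∫⁻ y in (Metric.closedBall (0 : E3) r)ᶜ, (‖y‖₊ : ℝ≥0∞) ^ (-q)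
      ≤ ∫⁻ y in ⋃ n : ℕ, (Metric.closedBall (0 : E3) (2 * ρ n) \ Metric.ball (0 : E3) (ρ n)),
          (‖y‖₊ : ℝ≥0∞) ^ (-q) := lintegral_mono_set hcov
    _ ≤ ∑' n : ℕ, ∫⁻ y in Metric.closedBall (0 : E3) (2 * ρ n) \ Metric.ball (0 : E3) (ρ n),
          (‖y‖₊ : ℝ≥0∞) ^ (-q) := lintegral_iUnion_le _ _
    _ ≤ ∑' n : ℕ, (ENNReal.ofReal (8 * r ^ (3 - q)) * ccV3) * x ^ n := by
        refine ENNReal.tsum_le_tsum fun n => le_trans (cc_annulus_bound (by linarith) (hρpos n)) ?_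
        rw [show (ENNReal.ofReal (8 * r ^ (3 - q)) * ccV3) * x ^ n
            = (ENNReal.ofReal (8 * r ^ (3 - q)) * x ^ n) * ccV3 by ring]
        refine mul_le_mul_left (le_of_eq ?_) ccV3
        have hρn : (8:ℝ) * (ρ n) ^ (3 - q) = 8 * r ^ (3 - q) * (2 ^ (3 - q)) ^ n := by
          rw [hρdef]
          simp only []
          rw [Real.mul_rpow hr.le (Real.rpow_pos_of_pos two_pos _).le,
            ← Real.rpow_natCast ((2:ℝ) ^ (3 - q)) n, ← Real.rpow_mul two_pos.le,
            ← Real.rpow_mul two_pos.le]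
          ring_nf
        rw [hρn, ENNReal.ofReal_mul (by positivity), hxdef,
          ENNReal.ofReal_pow (by positivity)]
    _ = (ENNReal.ofReal (8 * r ^ (3 - q)) * ccV3) * (1 - x)⁻¹ := by
        rw [ENNReal.tsum_mul_left, ENNReal.tsum_geometric]
    _ = ENNReal.ofReal 8 * (1 - x)⁻¹ * ccV3 * ENNReal.ofReal (r ^ (3 - q)) := by
        rw [ENNReal.ofReal_mul (by norm_num)]
        ring

lemma cc_anti {c t p : ℝ} (hc : 0 < c) (h : c ≤ t) (hp : 0 ≤ p) :
    (ENNReal.ofReal t) ^ (-p) ≤ ENNReal.ofReal (c ^ (-p)) := by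
  rw [← ENNReal.ofReal_rpow_of_pos hc, ENNReal.rpow_neg, ENNReal.rpow_neg]
  exact ENNReal.inv_le_inv.2 (ENNReal.rpow_le_rpow (ENNReal.ofReal_le_ofReal h) hp)

lemma cc_meas_knl (x : E3) (p : ℝ) : Measurable fun y : E3 => (‖x - y‖₊ : ℝ≥0∞) ^ (-p) :=
  ((measurable_const.sub measurable_id).nnnorm.coe_nnreal_ennreal).pow_const _

lemma cc_meas_norm (p : ℝ) : Measurable fun y : E3 => (‖y‖₊ : ℝ≥0∞) ^ (-p) :=
  (measurable_id.nnnorm.coe_nnreal_ennreal (α := E3)).pow_const _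

lemma cc_shift (x : E3) (ρ p : ℝ) :
    ∫⁻ y in Metric.closedBall x ρ, (‖x - y‖₊ : ℝ≥0∞) ^ (-p) =
      ∫⁻ z in Metric.closedBall (0 : E3) ρ, (‖z‖₊ : ℝ≥0∞) ^ (-p) := by
  rw [← lintegral_indicator measurableSet_closedBall,
    ← lintegral_indicator measurableSet_closedBall,
    ← lintegral_add_left_eq_self
      (fun y => (Metric.closedBall x ρ).indicator (fun y => (‖x - y‖₊ : ℝ≥0∞) ^ (-p)) y) x]
  congr 1
  funext z
  have hmem : x + z ∈ Metric.closedBall x ρ ↔ z ∈ Metric.closedBall (0:E3) ρ := by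
    simp [Metric.mem_closedBall, dist_eq_norm]
  by_cases h : z ∈ Metric.closedBall (0:E3) ρ
  · rw [Set.indicator_of_mem (hmem.2 h), Set.indicator_of_mem h]
    congr 1
    rw [show x - (x + z) = -z by abel, nnnorm_neg]
  · rw [Set.indicator_of_notMem (fun hc => h (hmem.1 hc)), Set.indicator_of_notMem h]

lemma cc_kernel_bound {a : ℝ} (ha1 : 1 < a) (ha3 : a < 3) :
    ∃ C : ℝ≥0∞, C ≠ ⊤ ∧ ∀ x : E3, x ≠ 0 →
      ∫⁻ y, (‖x - y‖₊ : ℝ≥0∞) ^ (-(2:ℝ)) * (‖y‖₊ : ℝ≥0∞) ^ (-a) ≤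
        C * ENNReal.ofReal (‖x‖ ^ (1 - a)) := by
  obtain ⟨C₂, hC₂t, hC₂⟩ := cc_lint_ball (p := 2) (by norm_num) (by norm_num)
  obtain ⟨Ca, hCat, hCa⟩ := cc_lint_ball (p := a) (by linarith) ha3
  obtain ⟨Cq, hCqt, hCq⟩ := cc_lint_compl (q := 2 + a) (by linarith)
  refine ⟨C₂ * ENNReal.ofReal ((2:ℝ) ^ (a - 1))
      + Ca * ENNReal.ofReal ((2:ℝ) ^ ((5:ℝ) - a))
      + ENNReal.ofReal 4 * Cq * ENNReal.ofReal ((2:ℝ) ^ ((1:ℝ) - a)), ?_, ?_⟩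
  · refine ENNReal.add_ne_top.2 ⟨ENNReal.add_ne_top.2 ⟨?_, ?_⟩, ?_⟩
    · exact ENNReal.mul_ne_top hC₂t ENNReal.ofReal_ne_top
    · exact ENNReal.mul_ne_top hCat ENNReal.ofReal_ne_top
    · exact ENNReal.mul_ne_top (ENNReal.mul_ne_top ENNReal.ofReal_ne_top hCqt)
        ENNReal.ofReal_ne_top
  intro x hx
  have hx0 : (0:ℝ) < ‖x‖ := norm_pos_iff.2 hx
  set ρ := ‖x‖ / 2 with hρ
  have hρ0 : 0 < ρ := by positivity
  set S1 := Metric.closedBall x ρ with hS1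
  set S2 := Metric.closedBall (0:E3) (2 * ‖x‖) \ Metric.closedBall x ρ with hS2
  set S3 := (Metric.closedBall (0:E3) (2 * ‖x‖))ᶜ with hS3
  have huniv : (univ : Set E3) ⊆ S1 ∪ (S2 ∪ S3) := by
    intro y _
    by_cases h1 : y ∈ S1
    · exact Or.inl h1
    by_cases h2 : y ∈ Metric.closedBall (0:E3) (2 * ‖x‖)
    · exact Or.inr (Or.inl ⟨h2, h1⟩)
    · exact Or.inr (Or.inr h2)
  -- piece 1
  have hp1 : ∫⁻ y in S1, (‖x - y‖₊ : ℝ≥0∞) ^ (-(2:ℝ)) * (‖y‖₊ : ℝ≥0∞) ^ (-a)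
      ≤ C₂ * ENNReal.ofReal ((2:ℝ) ^ (a - 1)) * ENNReal.ofReal (‖x‖ ^ (1 - a)) := by
    have hpt : ∀ y ∈ S1, (‖x - y‖₊ : ℝ≥0∞) ^ (-(2:ℝ)) * (‖y‖₊ : ℝ≥0∞) ^ (-a)
        ≤ ENNReal.ofReal (ρ ^ (-a)) * (‖x - y‖₊ : ℝ≥0∞) ^ (-(2:ℝ)) := by
      intro y hy
      have hxy : ‖x - y‖ ≤ ρ := by
        rw [← dist_eq_norm, dist_comm]
        exact hy
      have h1 : ρ ≤ ‖y‖ := by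
        have h2 : ‖x‖ ≤ ‖x - y‖ + ‖y‖ := by
          calc ‖x‖ = ‖(x - y) + y‖ := by rw [sub_add_cancel]
            _ ≤ ‖x - y‖ + ‖y‖ := norm_add_le _ _
        rw [hρ] at *
        linarith
      have hb : (‖y‖₊ : ℝ≥0∞) ^ (-a) ≤ ENNReal.ofReal (ρ ^ (-a)) := by
        rw [← ofReal_norm_eq_coe_nnnorm]
        exact cc_anti hρ0 h1 (by linarith)
      calc (‖x - y‖₊ : ℝ≥0∞) ^ (-(2:ℝ)) * (‖y‖₊ : ℝ≥0∞) ^ (-a)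
          ≤ (‖x - y‖₊ : ℝ≥0∞) ^ (-(2:ℝ)) * ENNReal.ofReal (ρ ^ (-a)) :=
            mul_le_mul_right hb _
        _ = ENNReal.ofReal (ρ ^ (-a)) * (‖x - y‖₊ : ℝ≥0∞) ^ (-(2:ℝ)) := mul_comm _ _
    have hreal : ρ ^ (-a) * ρ ^ ((3:ℝ) - 2) = 2 ^ (a - 1) * ‖x‖ ^ (1 - a) := by
      rw [← Real.rpow_add hρ0, show -a + ((3:ℝ) - 2) = 1 - a by ring, hρ,
        Real.div_rpow hx0.le (by norm_num), div_eq_mul_inv,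
        ← Real.rpow_neg (by norm_num : (0:ℝ) ≤ 2), show -((1:ℝ) - a) = a - 1 by ring]
      ring
    calc ∫⁻ y in S1, (‖x - y‖₊ : ℝ≥0∞) ^ (-(2:ℝ)) * (‖y‖₊ : ℝ≥0∞) ^ (-a)
        ≤ ∫⁻ y in S1, ENNReal.ofReal (ρ ^ (-a)) * (‖x - y‖₊ : ℝ≥0∞) ^ (-(2:ℝ)) :=
          setLIntegral_mono (measurable_const.mul (cc_meas_knl x 2)) hpt
      _ = ENNReal.ofReal (ρ ^ (-a)) * ∫⁻ y in S1, (‖x - y‖₊ : ℝ≥0∞) ^ (-(2:ℝ)) :=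
          lintegral_const_mul' _ _ ENNReal.ofReal_ne_top
      _ = ENNReal.ofReal (ρ ^ (-a)) * ∫⁻ z in Metric.closedBall (0:E3) ρ,
            (‖z‖₊ : ℝ≥0∞) ^ (-(2:ℝ)) := by rw [hS1, cc_shift]
      _ ≤ ENNReal.ofReal (ρ ^ (-a)) * (C₂ * ENNReal.ofReal (ρ ^ ((3:ℝ) - 2))) :=
          mul_le_mul_right (hC₂ ρ hρ0) _
      _ = C₂ * ENNReal.ofReal ((2:ℝ) ^ (a - 1)) * ENNReal.ofReal (‖x‖ ^ (1 - a)) := by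
          rw [show ENNReal.ofReal (ρ ^ (-a)) * (C₂ * ENNReal.ofReal (ρ ^ ((3:ℝ) - 2)))
              = C₂ * (ENNReal.ofReal (ρ ^ (-a)) * ENNReal.ofReal (ρ ^ ((3:ℝ) - 2))) by ring,
            ← ENNReal.ofReal_mul (by positivity), hreal,
            ENNReal.ofReal_mul (by positivity), ← mul_assoc]
  -- piece 2
  have hp2 : ∫⁻ y in S2, (‖x - y‖₊ : ℝ≥0∞) ^ (-(2:ℝ)) * (‖y‖₊ : ℝ≥0∞) ^ (-a)
      ≤ Ca * ENNReal.ofReal ((2:ℝ) ^ ((5:ℝ) - a)) * ENNReal.ofReal (‖x‖ ^ (1 - a)) := by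
    have hpt : ∀ y ∈ S2, (‖x - y‖₊ : ℝ≥0∞) ^ (-(2:ℝ)) * (‖y‖₊ : ℝ≥0∞) ^ (-a)
        ≤ ENNReal.ofReal (ρ ^ (-(2:ℝ))) * (‖y‖₊ : ℝ≥0∞) ^ (-a) := by
      intro y hy
      have hxy : ρ ≤ ‖x - y‖ := by
        have := hy.2
        rw [Metric.mem_closedBall, not_le, dist_comm, dist_eq_norm] at this
        exact this.le
      have hb : (‖x - y‖₊ : ℝ≥0∞) ^ (-(2:ℝ)) ≤ ENNReal.ofReal (ρ ^ (-(2:ℝ))) := by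
        rw [← ofReal_norm_eq_coe_nnnorm]
        exact cc_anti hρ0 hxy (by norm_num)
      exact mul_le_mul_left hb _
    have hreal : ρ ^ (-(2:ℝ)) * (2 * ‖x‖) ^ ((3:ℝ) - a) = 2 ^ ((5:ℝ) - a) * ‖x‖ ^ (1 - a) := by
      have e1 : ‖x‖ ^ (-(2:ℝ)) * ‖x‖ ^ ((3:ℝ) - a) = ‖x‖ ^ (1 - a) := by
        rw [← Real.rpow_add hx0, show -(2:ℝ) + ((3:ℝ) - a) = 1 - a by ring]
      have e2 : (2:ℝ) ^ ((3:ℝ) - a) / 2 ^ (-(2:ℝ)) = 2 ^ ((5:ℝ) - a) := by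
        rw [← Real.rpow_sub two_pos, show (3:ℝ) - a - -2 = 5 - a by ring]
      rw [hρ, Real.div_rpow hx0.le (by norm_num), Real.mul_rpow (by norm_num) hx0.le,
        ← e1, ← e2]
      have h2ne : (2:ℝ) ^ (-(2:ℝ)) ≠ 0 := (Real.rpow_pos_of_pos two_pos _).ne'
      field_simp
    calc ∫⁻ y in S2, (‖x - y‖₊ : ℝ≥0∞) ^ (-(2:ℝ)) * (‖y‖₊ : ℝ≥0∞) ^ (-a)
        ≤ ∫⁻ y in S2, ENNReal.ofReal (ρ ^ (-(2:ℝ))) * (‖y‖₊ : ℝ≥0∞) ^ (-a) :=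
          setLIntegral_mono (measurable_const.mul (cc_meas_norm a)) hpt
      _ = ENNReal.ofReal (ρ ^ (-(2:ℝ))) * ∫⁻ y in S2, (‖y‖₊ : ℝ≥0∞) ^ (-a) :=
          lintegral_const_mul' _ _ ENNReal.ofReal_ne_top
      _ ≤ ENNReal.ofReal (ρ ^ (-(2:ℝ))) * ∫⁻ y in Metric.closedBall (0:E3) (2 * ‖x‖),
            (‖y‖₊ : ℝ≥0∞) ^ (-a) := mul_le_mul_right (lintegral_mono_set diff_subset) _
      _ ≤ ENNReal.ofReal (ρ ^ (-(2:ℝ))) * (Ca * ENNReal.ofReal ((2 * ‖x‖) ^ ((3:ℝ) - a))) :=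
          mul_le_mul_right (hCa (2 * ‖x‖) (by positivity)) _
      _ = Ca * ENNReal.ofReal ((2:ℝ) ^ ((5:ℝ) - a)) * ENNReal.ofReal (‖x‖ ^ (1 - a)) := by
          rw [show ENNReal.ofReal (ρ ^ (-(2:ℝ))) * (Ca * ENNReal.ofReal ((2 * ‖x‖) ^ ((3:ℝ) - a)))
              = Ca * (ENNReal.ofReal (ρ ^ (-(2:ℝ))) * ENNReal.ofReal ((2 * ‖x‖) ^ ((3:ℝ) - a)))
              by ring,
            ← ENNReal.ofReal_mul (by positivity), hreal,
            ENNReal.ofReal_mul (by positivity), ← mul_assoc]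
  -- piece 3
  have hp3 : ∫⁻ y in S3, (‖x - y‖₊ : ℝ≥0∞) ^ (-(2:ℝ)) * (‖y‖₊ : ℝ≥0∞) ^ (-a)
      ≤ ENNReal.ofReal 4 * Cq * ENNReal.ofReal ((2:ℝ) ^ ((1:ℝ) - a)) *
        ENNReal.ofReal (‖x‖ ^ (1 - a)) := by
    have hpt : ∀ y ∈ S3, (‖x - y‖₊ : ℝ≥0∞) ^ (-(2:ℝ)) * (‖y‖₊ : ℝ≥0∞) ^ (-a)
        ≤ ENNReal.ofReal 4 * (‖y‖₊ : ℝ≥0∞) ^ (-(2 + a)) := by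
      intro y hy
      have hyx : 2 * ‖x‖ < ‖y‖ := by
        rw [hS3, mem_compl_iff, Metric.mem_closedBall, dist_zero_right, not_le] at hy
        exact hy
      have hy0 : (0:ℝ) < ‖y‖ := by linarith
      have hxy : ‖y‖ / 2 ≤ ‖x - y‖ := by
        have h1 : ‖y‖ - ‖x‖ ≤ ‖y - x‖ := by
          have := norm_sub_norm_le y x
          linarith
        rw [show x - y = -(y - x) from (neg_sub y x).symm, norm_neg]
        linarith
      have hb : (‖x - y‖₊ : ℝ≥0∞) ^ (-(2:ℝ)) ≤ ENNReal.ofReal ((‖y‖ / 2) ^ (-(2:ℝ))) := by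
        rw [← ofReal_norm_eq_coe_nnnorm]
        exact cc_anti (by positivity) hxy (by norm_num)
      have hbr : (‖y‖ / 2) ^ (-(2:ℝ)) = 4 * ‖y‖ ^ (-(2:ℝ)) := by
        rw [Real.div_rpow hy0.le (by norm_num), div_eq_mul_inv, ← Real.rpow_neg
          (by norm_num : (0:ℝ) ≤ 2), show -(-(2:ℝ)) = 2 by ring]
        rw [show (2:ℝ) ^ (2:ℝ) = 4 by
          rw [show (2:ℝ) = ((2:ℕ):ℝ) from by norm_num]
          rw [Real.rpow_natCast]
          norm_num]
        ring
      calc (‖x - y‖₊ : ℝ≥0∞) ^ (-(2:ℝ)) * (‖y‖₊ : ℝ≥0∞) ^ (-a)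
          ≤ ENNReal.ofReal ((‖y‖ / 2) ^ (-(2:ℝ))) * (‖y‖₊ : ℝ≥0∞) ^ (-a) :=
            mul_le_mul_left hb _
        _ = ENNReal.ofReal 4 * ((‖y‖₊ : ℝ≥0∞) ^ (-(2:ℝ)) * (‖y‖₊ : ℝ≥0∞) ^ (-a)) := by
            rw [hbr, ENNReal.ofReal_mul (by norm_num), ← ENNReal.ofReal_rpow_of_pos hy0,
              ofReal_norm_eq_coe_nnnorm, mul_assoc]
        _ = ENNReal.ofReal 4 * (‖y‖₊ : ℝ≥0∞) ^ (-(2 + a)) := by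
            rw [← ENNReal.rpow_add _ _ (by simpa using hy0.ne') ENNReal.coe_ne_top,
              show -(2:ℝ) + -a = -(2 + a) by ring]
    calc ∫⁻ y in S3, (‖x - y‖₊ : ℝ≥0∞) ^ (-(2:ℝ)) * (‖y‖₊ : ℝ≥0∞) ^ (-a)
        ≤ ∫⁻ y in S3, ENNReal.ofReal 4 * (‖y‖₊ : ℝ≥0∞) ^ (-(2 + a)) :=
          setLIntegral_mono (measurable_const.mul (cc_meas_norm (2 + a))) hpt
      _ = ENNReal.ofReal 4 * ∫⁻ y in S3, (‖y‖₊ : ℝ≥0∞) ^ (-(2 + a)) :=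
          lintegral_const_mul' _ _ ENNReal.ofReal_ne_top
      _ ≤ ENNReal.ofReal 4 * (Cq * ENNReal.ofReal ((2 * ‖x‖) ^ ((3:ℝ) - (2 + a)))) :=
          mul_le_mul_right (hCq (2 * ‖x‖) (by positivity)) _
      _ = ENNReal.ofReal 4 * Cq * ENNReal.ofReal ((2:ℝ) ^ ((1:ℝ) - a)) *
            ENNReal.ofReal (‖x‖ ^ (1 - a)) := by
          rw [show (3:ℝ) - (2 + a) = 1 - a by ring,
            Real.mul_rpow (by norm_num : (0:ℝ) ≤ 2) hx0.le,
            ENNReal.ofReal_mul (by positivity)]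
          ring
  calc ∫⁻ y, (‖x - y‖₊ : ℝ≥0∞) ^ (-(2:ℝ)) * (‖y‖₊ : ℝ≥0∞) ^ (-a)
      = ∫⁻ y in (univ : Set E3), (‖x - y‖₊ : ℝ≥0∞) ^ (-(2:ℝ)) * (‖y‖₊ : ℝ≥0∞) ^ (-a) := by
        rw [Measure.restrict_univ]
    _ ≤ ∫⁻ y in S1 ∪ (S2 ∪ S3), (‖x - y‖₊ : ℝ≥0∞) ^ (-(2:ℝ)) * (‖y‖₊ : ℝ≥0∞) ^ (-a) :=
        lintegral_mono_set huniv
    _ ≤ (∫⁻ y in S1, (‖x - y‖₊ : ℝ≥0∞) ^ (-(2:ℝ)) * (‖y‖₊ : ℝ≥0∞) ^ (-a))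
        + ((∫⁻ y in S2, (‖x - y‖₊ : ℝ≥0∞) ^ (-(2:ℝ)) * (‖y‖₊ : ℝ≥0∞) ^ (-a))
        + ∫⁻ y in S3, (‖x - y‖₊ : ℝ≥0∞) ^ (-(2:ℝ)) * (‖y‖₊ : ℝ≥0∞) ^ (-a)) :=
        le_trans (lintegral_union_le _ _ _) (add_le_add_right (lintegral_union_le _ _ _) _)
    _ ≤ C₂ * ENNReal.ofReal ((2:ℝ) ^ (a - 1)) * ENNReal.ofReal (‖x‖ ^ (1 - a))
        + (Ca * ENNReal.ofReal ((2:ℝ) ^ ((5:ℝ) - a)) * ENNReal.ofReal (‖x‖ ^ (1 - a))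
        + ENNReal.ofReal 4 * Cq * ENNReal.ofReal ((2:ℝ) ^ ((1:ℝ) - a)) *
            ENNReal.ofReal (‖x‖ ^ (1 - a))) :=
        add_le_add hp1 (add_le_add hp2 hp3)
    _ = (C₂ * ENNReal.ofReal ((2:ℝ) ^ (a - 1))
        + Ca * ENNReal.ofReal ((2:ℝ) ^ ((5:ℝ) - a))
        + ENNReal.ofReal 4 * Cq * ENNReal.ofReal ((2:ℝ) ^ ((1:ℝ) - a))) *
          ENNReal.ofReal (‖x‖ ^ (1 - a)) := by ring

lemma cc_rpow_add_neg {p q : ℝ} (hp : p < 0) (hq : q < 0) (b : ℝ≥0∞) :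
    b ^ (p + q) = b ^ p * b ^ q := by
  rcases eq_or_ne b 0 with rfl | hb0
  · rw [ENNReal.zero_rpow_of_neg hp, ENNReal.zero_rpow_of_neg hq,
      ENNReal.zero_rpow_of_neg (by linarith), ENNReal.top_mul_top]
  rcases eq_or_ne b ⊤ with rfl | hbt
  · rw [ENNReal.top_rpow_of_neg hp, ENNReal.top_rpow_of_neg hq,
      ENNReal.top_rpow_of_neg (by linarith), mul_zero]
  exact ENNReal.rpow_add _ _ hb0 hbt

noncomputable def ccW : E3 → ℝ≥0∞ := fun x => (‖x‖₊ : ℝ≥0∞) ^ (-(3/2 : ℝ))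

noncomputable def ccM : E3 × E3 → ℝ≥0∞ :=
  fun z => (‖z.1 - z.2‖₊ : ℝ≥0∞) ^ (-(2:ℝ)) * (‖z.2‖₊ : ℝ≥0∞) ^ (-(1:ℝ))

lemma ccW_meas : Measurable ccW := cc_meas_norm (3/2)

lemma ccM_meas : Measurable ccM :=
  (((measurable_fst.sub measurable_snd).nnnorm.coe_nnreal_ennreal).pow_const _).mul
    ((measurable_snd.nnnorm.coe_nnreal_ennreal).pow_const _)

lemma ccW_ne_zero (x : E3) (hx : x ≠ 0) : ccW x ≠ 0 := by
  rw [ccW, Ne, ENNReal.rpow_eq_zero_iff]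
  push_neg
  exact ⟨fun h => absurd (by simpa using h) (nnnorm_ne_zero_iff.2 hx),
    fun h => absurd h ENNReal.coe_ne_top⟩

lemma ccW_ne_top (x : E3) (hx : x ≠ 0) : ccW x ≠ ⊤ := by
  rw [ccW, ← ENNReal.coe_rpow_of_ne_zero (nnnorm_ne_zero_iff.2 hx)]
  exact ENNReal.coe_ne_top

lemma cc_schur : ∃ D : ℝ≥0∞, D ≠ ⊤ ∧ ∀ f g : E3 → ℝ≥0∞,
    AEMeasurable f volume → AEMeasurable g volume →
    ∫⁻ x, ∫⁻ y, f x * ((‖x - y‖₊ : ℝ≥0∞) ^ (-(2:ℝ)) * (‖y‖₊ : ℝ≥0∞) ^ (-(1:ℝ))) * g y ≤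
      D * (∫⁻ x, f x ^ (2:ℝ)) ^ ((1:ℝ)/2) * (∫⁻ y, g y ^ (2:ℝ)) ^ ((1:ℝ)/2) := by
  obtain ⟨C₁, hC₁t, hC₁⟩ := cc_kernel_bound (a := 5/2) (by norm_num) (by norm_num)
  obtain ⟨C₂, hC₂t, hC₂⟩ := cc_kernel_bound (a := 3/2) (by norm_num) (by norm_num)
  have hrow : ∀ x : E3, x ≠ 0 → ∫⁻ y, ccM (x, y) * ccW y ≤ C₁ * ccW x := by
    intro x hx
    have hx0 : (0:ℝ) < ‖x‖ := norm_pos_iff.2 hx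
    have heq : ∀ y : E3, ccM (x, y) * ccW y
        = (‖x - y‖₊ : ℝ≥0∞) ^ (-(2:ℝ)) * (‖y‖₊ : ℝ≥0∞) ^ (-(5/2:ℝ)) := by
      intro y
      simp only [ccM, ccW]
      rw [mul_assoc, ← cc_rpow_add_neg (by norm_num) (by norm_num),
        show (-(1:ℝ)) + (-(3/2:ℝ)) = -(5/2:ℝ) by norm_num]
    rw [lintegral_congr heq]
    refine le_trans (hC₁ x hx) (le_of_eq ?_)
    congr 1
    simp only [ccW]
    rw [← ofReal_norm_eq_coe_nnnorm, ENNReal.ofReal_rpow_of_pos hx0,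
      show (1:ℝ) - 5/2 = -(3/2:ℝ) by norm_num]
  have hcol : ∀ y : E3, y ≠ 0 → ∫⁻ x, ccM (x, y) * ccW x ≤ C₂ * ccW y := by
    intro y hy
    have hy0 : (0:ℝ) < ‖y‖ := norm_pos_iff.2 hy
    have heq : ∀ x : E3, ccM (x, y) * ccW x
        = (‖y‖₊ : ℝ≥0∞) ^ (-(1:ℝ)) *
          ((‖y - x‖₊ : ℝ≥0∞) ^ (-(2:ℝ)) * (‖x‖₊ : ℝ≥0∞) ^ (-(3/2:ℝ))) := by
      intro x
      simp only [ccM, ccW]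
      rw [show ‖x - y‖₊ = ‖y - x‖₊ by rw [← neg_sub, nnnorm_neg]]
      ring
    have hne : ((‖y‖₊ : ℝ≥0∞) ^ (-(1:ℝ))) ≠ ⊤ := by
      rw [← ENNReal.coe_rpow_of_ne_zero (nnnorm_ne_zero_iff.2 hy)]
      exact ENNReal.coe_ne_top
    rw [lintegral_congr heq, lintegral_const_mul' _ _ hne]
    calc (‖y‖₊ : ℝ≥0∞) ^ (-(1:ℝ)) *
          ∫⁻ x, (‖y - x‖₊ : ℝ≥0∞) ^ (-(2:ℝ)) * (‖x‖₊ : ℝ≥0∞) ^ (-(3/2:ℝ))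
        ≤ (‖y‖₊ : ℝ≥0∞) ^ (-(1:ℝ)) * (C₂ * ENNReal.ofReal (‖y‖ ^ ((1:ℝ) - 3/2))) :=
          mul_le_mul_right (hC₂ y hy) _
      _ = C₂ * ccW y := by
          rw [show (1:ℝ) - 3/2 = -(1/2:ℝ) by norm_num, ← ENNReal.ofReal_rpow_of_pos hy0,
            ofReal_norm_eq_coe_nnnorm, ccW,
            show (-(3/2:ℝ)) = (-(1:ℝ)) + (-(1/2:ℝ)) by norm_num,
            cc_rpow_add_neg (by norm_num) (by norm_num)]
          ring
  refine ⟨C₁ ^ ((1:ℝ)/2) * C₂ ^ ((1:ℝ)/2), ?_, ?_⟩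
  · exact ENNReal.mul_ne_top (ENNReal.rpow_ne_top_of_nonneg (by norm_num) hC₁t)
      (ENNReal.rpow_ne_top_of_nonneg (by norm_num) hC₂t)
  intro f g hf hg
  have hae1 : ∀ᵐ z : E3 × E3 ∂(volume.prod volume), z.1 ≠ 0 := by
    rw [ae_iff]
    have hnull : (volume.prod volume) (({0} : Set E3) ×ˢ (univ : Set E3)) = 0 := by
      rw [Measure.prod_prod, measure_singleton, zero_mul]
    exact measure_mono_null
      (fun z hz => Set.mem_prod.2 ⟨Set.mem_singleton_iff.2 (not_not.1 hz), Set.mem_univ _⟩) hnull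
  have hae2 : ∀ᵐ z : E3 × E3 ∂(volume.prod volume), z.2 ≠ 0 := by
    rw [ae_iff]
    have hnull : (volume.prod volume) ((univ : Set E3) ×ˢ ({0} : Set E3)) = 0 := by
      rw [Measure.prod_prod, measure_singleton, mul_zero]
    exact measure_mono_null
      (fun z hz => Set.mem_prod.2 ⟨Set.mem_univ _, Set.mem_singleton_iff.2 (not_not.1 hz)⟩) hnull
  have h0ae : ∀ᵐ x : E3 ∂volume, x ≠ 0 := by
    rw [ae_iff]
    exact measure_mono_null (fun x hx => Set.mem_singleton_iff.2 (not_not.1 hx))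
      (measure_singleton 0)
  set A : E3 × E3 → ℝ≥0∞ :=
    fun z => f z.1 * (ccM z * ccW z.2 * (ccW z.1)⁻¹) ^ ((1:ℝ)/2) with hAdef
  set B : E3 × E3 → ℝ≥0∞ :=
    fun z => g z.2 * (ccM z * ccW z.1 * (ccW z.2)⁻¹) ^ ((1:ℝ)/2) with hBdef
  have hAmeas : AEMeasurable A (volume.prod volume) := by
    rw [hAdef]
    exact hf.comp_fst.mul (((ccM_meas.mul (ccW_meas.comp measurable_snd)).mul
      ((ccW_meas.comp measurable_fst).inv)).pow_const _).aemeasurable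
  have hBmeas : AEMeasurable B (volume.prod volume) := by
    rw [hBdef]
    exact hg.comp_snd.mul (((ccM_meas.mul (ccW_meas.comp measurable_fst)).mul
      ((ccW_meas.comp measurable_snd).inv)).pow_const _).aemeasurable
  have hFm : AEMeasurable (fun z : E3 × E3 => f z.1 * ccM z * g z.2) (volume.prod volume) :=
    (hf.comp_fst.mul ccM_meas.aemeasurable).mul hg.comp_snd
  have hsq : ∀ m : ℝ≥0∞, m * m = m ^ (2:ℝ) := fun m => by
    rw [show (2:ℝ) = ((2:ℕ):ℝ) by norm_num, ENNReal.rpow_natCast, pow_two]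
  have hAB : ∀ᵐ z : E3 × E3 ∂(volume.prod volume),
      f z.1 * ccM z * g z.2 = A z * B z := by
    filter_upwards [hae1, hae2] with z h1 h2
    have e : (ccM z * ccW z.2 * (ccW z.1)⁻¹) ^ ((1:ℝ)/2) *
        (ccM z * ccW z.1 * (ccW z.2)⁻¹) ^ ((1:ℝ)/2) = ccM z := by
      rw [← ENNReal.mul_rpow_of_nonneg _ _ (by norm_num : (0:ℝ) ≤ 1/2),
        show ccM z * ccW z.2 * (ccW z.1)⁻¹ * (ccM z * ccW z.1 * (ccW z.2)⁻¹)
          = ccM z * ccM z * (ccW z.2 * (ccW z.2)⁻¹) * (ccW z.1 * (ccW z.1)⁻¹) by ring,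
        ENNReal.mul_inv_cancel (ccW_ne_zero _ h2) (ccW_ne_top _ h2),
        ENNReal.mul_inv_cancel (ccW_ne_zero _ h1) (ccW_ne_top _ h1), mul_one, mul_one,
        hsq, ← ENNReal.rpow_mul]
      norm_num
    calc f z.1 * ccM z * g z.2 = f z.1 * g z.2 * ccM z := by ring
      _ = A z * B z := by
          rw [← e]
          simp only [hAdef, hBdef]
          ring
  have hA2 : ∫⁻ z, A z ^ (2:ℝ) ∂(volume.prod volume) ≤ C₁ * ∫⁻ x, f x ^ (2:ℝ) := by
    have hAsq : ∀ z : E3 × E3, A z ^ (2:ℝ)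
        = f z.1 ^ (2:ℝ) * (ccM z * ccW z.2 * (ccW z.1)⁻¹) := by
      intro z
      rw [hAdef]
      simp only []
      rw [ENNReal.mul_rpow_of_nonneg _ _ (by norm_num : (0:ℝ) ≤ 2), ← ENNReal.rpow_mul]
      norm_num
    rw [lintegral_congr hAsq]
    have hmeas2 : AEMeasurable
        (fun z : E3 × E3 => f z.1 ^ (2:ℝ) * (ccM z * ccW z.2 * (ccW z.1)⁻¹))
        (volume.prod volume) :=
      (hf.comp_fst.pow_const _).mul ((ccM_meas.mul (ccW_meas.comp measurable_snd)).mul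
        ((ccW_meas.comp measurable_fst).inv)).aemeasurable
    rw [lintegral_prod _ hmeas2]
    have hinner : ∀ x : E3, ∫⁻ y, f x ^ (2:ℝ) * (ccM (x, y) * ccW y * (ccW x)⁻¹)
        = (f x ^ (2:ℝ) * (ccW x)⁻¹) * ∫⁻ y, ccM (x, y) * ccW y := by
      intro x
      have hmy : Measurable fun y : E3 => ccM (x, y) * ccW y := by
        exact (ccM_meas.comp measurable_prodMk_left).mul ccW_meas
      rw [← lintegral_const_mul _ hmy]
      exact lintegral_congr fun y => by ring
    rw [lintegral_congr hinner]
    have hxae : ∀ᵐ x : E3 ∂volume,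
        (f x ^ (2:ℝ) * (ccW x)⁻¹) * ∫⁻ y, ccM (x, y) * ccW y ≤ C₁ * f x ^ (2:ℝ) := by
      filter_upwards [h0ae] with x hx
      calc (f x ^ (2:ℝ) * (ccW x)⁻¹) * ∫⁻ y, ccM (x, y) * ccW y
          ≤ (f x ^ (2:ℝ) * (ccW x)⁻¹) * (C₁ * ccW x) := mul_le_mul_right (hrow x hx) _
        _ = C₁ * f x ^ (2:ℝ) * ((ccW x)⁻¹ * ccW x) := by ring
        _ = C₁ * f x ^ (2:ℝ) := by
            rw [ENNReal.inv_mul_cancel (ccW_ne_zero x hx) (ccW_ne_top x hx), mul_one]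
    calc ∫⁻ x, (f x ^ (2:ℝ) * (ccW x)⁻¹) * ∫⁻ y, ccM (x, y) * ccW y
        ≤ ∫⁻ x, C₁ * f x ^ (2:ℝ) := lintegral_mono_ae hxae
      _ = C₁ * ∫⁻ x, f x ^ (2:ℝ) := lintegral_const_mul' _ _ hC₁t
  have hB2 : ∫⁻ z, B z ^ (2:ℝ) ∂(volume.prod volume) ≤ C₂ * ∫⁻ y, g y ^ (2:ℝ) := by
    have hBsq : ∀ z : E3 × E3, B z ^ (2:ℝ)
        = g z.2 ^ (2:ℝ) * (ccM z * ccW z.1 * (ccW z.2)⁻¹) := by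
      intro z
      rw [hBdef]
      simp only []
      rw [ENNReal.mul_rpow_of_nonneg _ _ (by norm_num : (0:ℝ) ≤ 2), ← ENNReal.rpow_mul]
      norm_num
    rw [lintegral_congr hBsq]
    have hmeas2 : AEMeasurable
        (fun z : E3 × E3 => g z.2 ^ (2:ℝ) * (ccM z * ccW z.1 * (ccW z.2)⁻¹))
        (volume.prod volume) :=
      (hg.comp_snd.pow_const _).mul ((ccM_meas.mul (ccW_meas.comp measurable_fst)).mul
        ((ccW_meas.comp measurable_snd).inv)).aemeasurable
    rw [lintegral_prod_symm _ hmeas2]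
    have hinner : ∀ y : E3, ∫⁻ x, g y ^ (2:ℝ) * (ccM (x, y) * ccW x * (ccW y)⁻¹)
        = (g y ^ (2:ℝ) * (ccW y)⁻¹) * ∫⁻ x, ccM (x, y) * ccW x := by
      intro y
      have hmx : Measurable fun x : E3 => ccM (x, y) * ccW x := by
        exact (ccM_meas.comp (measurable_id.prodMk measurable_const)).mul ccW_meas
      rw [← lintegral_const_mul _ hmx]
      exact lintegral_congr fun x => by ring
    rw [lintegral_congr hinner]
    have hyae : ∀ᵐ y : E3 ∂volume,
        (g y ^ (2:ℝ) * (ccW y)⁻¹) * ∫⁻ x, ccM (x, y) * ccW x ≤ C₂ * g y ^ (2:ℝ) := by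
      filter_upwards [h0ae] with y hy
      calc (g y ^ (2:ℝ) * (ccW y)⁻¹) * ∫⁻ x, ccM (x, y) * ccW x
          ≤ (g y ^ (2:ℝ) * (ccW y)⁻¹) * (C₂ * ccW y) := mul_le_mul_right (hcol y hy) _
        _ = C₂ * g y ^ (2:ℝ) * ((ccW y)⁻¹ * ccW y) := by ring
        _ = C₂ * g y ^ (2:ℝ) := by
            rw [ENNReal.inv_mul_cancel (ccW_ne_zero y hy) (ccW_ne_top y hy), mul_one]
    calc ∫⁻ y, (g y ^ (2:ℝ) * (ccW y)⁻¹) * ∫⁻ x, ccM (x, y) * ccW x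
        ≤ ∫⁻ y, C₂ * g y ^ (2:ℝ) := lintegral_mono_ae hyae
      _ = C₂ * ∫⁻ y, g y ^ (2:ℝ) := lintegral_const_mul' _ _ hC₂t
  calc ∫⁻ x, ∫⁻ y, f x * ((‖x - y‖₊ : ℝ≥0∞) ^ (-(2:ℝ)) * (‖y‖₊ : ℝ≥0∞) ^ (-(1:ℝ))) * g y
      = ∫⁻ z : E3 × E3, f z.1 * ccM z * g z.2 ∂(volume.prod volume) :=
        lintegral_lintegral hFm
    _ = ∫⁻ z : E3 × E3, A z * B z ∂(volume.prod volume) := lintegral_congr_ae hAB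
    _ ≤ (∫⁻ z, A z ^ (2:ℝ) ∂(volume.prod volume)) ^ ((1:ℝ)/2) *
        (∫⁻ z, B z ^ (2:ℝ) ∂(volume.prod volume)) ^ ((1:ℝ)/2) := by
        have h := ENNReal.lintegral_mul_le_Lp_mul_Lq (volume.prod volume)
          (Real.holderConjugate_iff (p := 2) (q := 2)|>.2 ⟨by norm_num, by norm_num⟩) hAmeas hBmeas
        simpa [Pi.mul_apply] using h
    _ ≤ (C₁ * ∫⁻ x, f x ^ (2:ℝ)) ^ ((1:ℝ)/2) * (C₂ * ∫⁻ y, g y ^ (2:ℝ)) ^ ((1:ℝ)/2) :=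
        mul_le_mul' (ENNReal.rpow_le_rpow hA2 (by norm_num))
          (ENNReal.rpow_le_rpow hB2 (by norm_num))
    _ = C₁ ^ ((1:ℝ)/2) * C₂ ^ ((1:ℝ)/2) * (∫⁻ x, f x ^ (2:ℝ)) ^ ((1:ℝ)/2) *
        (∫⁻ y, g y ^ (2:ℝ)) ^ ((1:ℝ)/2) := by
        rw [ENNReal.mul_rpow_of_nonneg _ _ (by norm_num : (0:ℝ) ≤ 1/2),
          ENNReal.mul_rpow_of_nonneg _ _ (by norm_num : (0:ℝ) ≤ 1/2)]
        ring
    _ = C₁ ^ ((1:ℝ)/2) * C₂ ^ ((1:ℝ)/2) * (∫⁻ x, f x ^ (2:ℝ)) ^ ((1:ℝ)/2) *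
        (∫⁻ y, g y ^ (2:ℝ)) ^ ((1:ℝ)/2) := rfl


/-- Let `K : ℝ³ × ℝ³ → ℂ` be measurable with `|K(x,y)| ≤ c₀/|x-y|³` for `x ≠ y`, let
`g₀ : ℝ³ → ℝ` be Lipschitz with constant `c₁`, let `R > 1` and set `g(x) := g₀(x/R)`.
Then there is a constant `c`, depending only on `c₀` and `c₁` (not on `R`), such that for
all `ψ ∈ L²(ℝ³)` and all `φ ∈ C_c^∞(ℝ³)`:
`|∫∫ conj(ψ(x)) K(x,y) (g(y) - g(x)) (1/|y|) φ(y) dy dx| ≤ (c/R) ‖ψ‖₂ ‖φ‖₂`. -/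
theorem commutator_coulomb_form_bound_scaled (c₀ : ℝ) (c₁ : NNReal) :
    ∃ c : ℝ, ∀ (K : EuclideanSpace ℝ (Fin 3) × EuclideanSpace ℝ (Fin 3) → ℂ)
      (g₀ : EuclideanSpace ℝ (Fin 3) → ℝ) (R : ℝ),
      Measurable K →
      (∀ x y : EuclideanSpace ℝ (Fin 3), x ≠ y → ‖K (x, y)‖ ≤ c₀ / ‖x - y‖ ^ 3) →
      LipschitzWith c₁ g₀ →
      1 < R →
      ∀ ψ φ : EuclideanSpace ℝ (Fin 3) → ℂ,
        MemLp ψ 2 volume → ContDiff ℝ (⊤ : ℕ∞) φ → HasCompactSupport φ →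
        ‖∫ x, ∫ y, (starRingEnd ℂ) (ψ x) * K (x, y) *
            ((g₀ (R⁻¹ • y) - g₀ (R⁻¹ • x) : ℝ) : ℂ) *
            ((1 / ‖y‖ : ℝ) : ℂ) * φ y‖ ≤
          c / R * (eLpNorm ψ 2 volume).toReal * (eLpNorm φ 2 volume).toReal := by
  obtain ⟨D, hDt, hD⟩ := cc_schur
  refine ⟨c₀ * (c₁ : ℝ) * D.toReal, ?_⟩
  intro K g₀ R hKm hK hg hR ψ φ hψ hφsm hφc
  have hR0 : (0:ℝ) < R := lt_trans one_pos hR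
  have hc₀ : 0 ≤ c₀ := by
    set y₀ : E3 := EuclideanSpace.single (0 : Fin 3) (1:ℝ) with hy₀
    have hy : y₀ ≠ 0 := by
      intro h
      have h0 := congrArg (fun v : E3 => v (0 : Fin 3)) h
      rw [hy₀] at h0
      simp [EuclideanSpace.single_apply] at h0
    have hd : (0 : E3) ≠ y₀ := fun h => hy h.symm
    have h := hK 0 y₀ hd
    have hn := norm_nonneg (K (0, y₀))
    have hpos : (0:ℝ) < ‖(0 : E3) - y₀‖ ^ 3 := by
      have hne : (0 : E3) - y₀ ≠ 0 := by
        rw [zero_sub, neg_ne_zero]; exact hy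
      have := norm_pos_iff.2 hne
      positivity
    by_contra hc
    push_neg at hc
    have : c₀ / ‖(0 : E3) - y₀‖ ^ 3 < 0 := div_neg_of_neg_of_pos hc hpos
    linarith
  have hφ2 : MemLp φ 2 volume := hφsm.continuous.memLp_of_hasCompactSupport hφc
  set c' := c₀ * (c₁ : ℝ) / R with hc'
  have hc'0 : 0 ≤ c' := by positivity
  set f : E3 → ℝ≥0∞ := fun x => (‖ψ x‖₊ : ℝ≥0∞) with hfdef
  set g : E3 → ℝ≥0∞ := fun y => (‖φ y‖₊ : ℝ≥0∞) with hgdef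
  have hf : AEMeasurable f volume := hψ.1.aemeasurable.enorm
  have hgm : AEMeasurable g volume := hφsm.continuous.measurable.aemeasurable.enorm
  -- pointwise bound
  have hpt : ∀ x y : E3, ((‖(starRingEnd ℂ) (ψ x) * K (x, y) *
      ((g₀ (R⁻¹ • y) - g₀ (R⁻¹ • x) : ℝ) : ℂ) * ((1 / ‖y‖ : ℝ) : ℂ) * φ y‖₊ : ℝ≥0∞))
      ≤ ENNReal.ofReal c' * (f x *
        ((‖x - y‖₊ : ℝ≥0∞) ^ (-(2:ℝ)) * (‖y‖₊ : ℝ≥0∞) ^ (-(1:ℝ))) * g y) := by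
    intro x y
    rcases eq_or_ne x y with rfl | hxy
    · simp
    have ht0 : (0:ℝ) < ‖x - y‖ := norm_pos_iff.2 (sub_ne_zero.2 hxy)
    have e1 : (‖K (x, y)‖₊ : ℝ≥0∞) ≤ ENNReal.ofReal (c₀ / ‖x - y‖ ^ 3) := by
      rw [← ofReal_norm_eq_coe_nnnorm]
      exact ENNReal.ofReal_le_ofReal (hK x y hxy)
    have e2 : (‖(((g₀ (R⁻¹ • y) - g₀ (R⁻¹ • x) : ℝ)) : ℂ)‖₊ : ℝ≥0∞)
        ≤ ENNReal.ofReal ((c₁:ℝ) / R * ‖x - y‖) := by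
      rw [← ofReal_norm_eq_coe_nnnorm]
      apply ENNReal.ofReal_le_ofReal
      rw [Complex.norm_real]
      calc ‖g₀ (R⁻¹ • y) - g₀ (R⁻¹ • x)‖ = dist (g₀ (R⁻¹ • y)) (g₀ (R⁻¹ • x)) := by
            rw [dist_eq_norm]
        _ ≤ (c₁ : ℝ) * dist (R⁻¹ • y) (R⁻¹ • x) := hg.dist_le_mul _ _
        _ = (c₁:ℝ) / R * ‖x - y‖ := by
            rw [dist_eq_norm, ← smul_sub, norm_smul, norm_inv, Real.norm_eq_abs,
              abs_of_pos hR0, norm_sub_rev]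
            ring
    have e3 : (‖((1 / ‖y‖ : ℝ) : ℂ)‖₊ : ℝ≥0∞) ≤ (‖y‖₊ : ℝ≥0∞) ^ (-(1:ℝ)) := by
      rcases eq_or_ne y 0 with rfl | hy
      · simp
      have hy0 : (0:ℝ) < ‖y‖ := norm_pos_iff.2 hy
      rw [← ofReal_norm_eq_coe_nnnorm, ← ofReal_norm_eq_coe_nnnorm,
        ENNReal.ofReal_rpow_of_pos hy0, Complex.norm_real]
      apply ENNReal.ofReal_le_ofReal
      rw [Real.rpow_neg_one, Real.norm_eq_abs, abs_of_pos (by positivity), one_div]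
    have e12 : (‖K (x, y)‖₊ : ℝ≥0∞) * (‖(((g₀ (R⁻¹ • y) - g₀ (R⁻¹ • x) : ℝ)) : ℂ)‖₊ : ℝ≥0∞)
        ≤ ENNReal.ofReal c' * (‖x - y‖₊ : ℝ≥0∞) ^ (-(2:ℝ)) := by
      calc (‖K (x, y)‖₊ : ℝ≥0∞) * (‖(((g₀ (R⁻¹ • y) - g₀ (R⁻¹ • x) : ℝ)) : ℂ)‖₊ : ℝ≥0∞)
          ≤ ENNReal.ofReal (c₀ / ‖x - y‖ ^ 3) * ENNReal.ofReal ((c₁:ℝ) / R * ‖x - y‖) :=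
            mul_le_mul' e1 e2
        _ = ENNReal.ofReal c' * (‖x - y‖₊ : ℝ≥0∞) ^ (-(2:ℝ)) := by
            rw [← ENNReal.ofReal_mul (div_nonneg hc₀ (by positivity))]
            have hreal : c₀ / ‖x - y‖ ^ 3 * ((c₁:ℝ) / R * ‖x - y‖)
                = c' * ‖x - y‖ ^ (-(2:ℝ)) := by
              rw [show ‖x - y‖ ^ (-(2:ℝ)) = (‖x - y‖ ^ (2:ℕ))⁻¹ by
                  rw [Real.rpow_neg (norm_nonneg _), show ((2:ℝ)) = ((2:ℕ):ℝ) by norm_num,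
                    Real.rpow_natCast],
                hc']
              field_simp
            rw [hreal, ENNReal.ofReal_mul hc'0, ← ENNReal.ofReal_rpow_of_pos ht0,
              ofReal_norm_eq_coe_nnnorm]
    calc ((‖(starRingEnd ℂ) (ψ x) * K (x, y) *
        ((g₀ (R⁻¹ • y) - g₀ (R⁻¹ • x) : ℝ) : ℂ) * ((1 / ‖y‖ : ℝ) : ℂ) * φ y‖₊ : ℝ≥0∞))
        = (‖ψ x‖₊ : ℝ≥0∞) * (((‖K (x, y)‖₊ : ℝ≥0∞) *
            (‖(((g₀ (R⁻¹ • y) - g₀ (R⁻¹ • x) : ℝ)) : ℂ)‖₊ : ℝ≥0∞)) *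
            (‖((1 / ‖y‖ : ℝ) : ℂ)‖₊ : ℝ≥0∞)) * (‖φ y‖₊ : ℝ≥0∞) := by
          simp only [nnnorm_mul, ENNReal.coe_mul, RCLike.nnnorm_conj]
          ring
      _ ≤ (‖ψ x‖₊ : ℝ≥0∞) * ((ENNReal.ofReal c' * (‖x - y‖₊ : ℝ≥0∞) ^ (-(2:ℝ))) *
            (‖y‖₊ : ℝ≥0∞) ^ (-(1:ℝ))) * (‖φ y‖₊ : ℝ≥0∞) :=
          mul_le_mul_left (mul_le_mul_right (mul_le_mul' e12 e3) _) _
      _ = ENNReal.ofReal c' * (f x *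
            ((‖x - y‖₊ : ℝ≥0∞) ^ (-(2:ℝ)) * (‖y‖₊ : ℝ≥0∞) ^ (-(1:ℝ))) * g y) := by
          rw [hfdef, hgdef]
          ring
  have hSψ : (∫⁻ x, f x ^ (2:ℝ)) ^ ((1:ℝ)/2) = eLpNorm ψ 2 volume := by
    rw [eLpNorm_eq_lintegral_rpow_enorm_toReal (by norm_num) (by norm_num), hfdef]
    norm_num
    rfl
  have hSφ : (∫⁻ y, g y ^ (2:ℝ)) ^ ((1:ℝ)/2) = eLpNorm φ 2 volume := by
    rw [eLpNorm_eq_lintegral_rpow_enorm_toReal (by norm_num) (by norm_num), hgdef]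
    norm_num
    rfl
  have key : ∫⁻ x, ∫⁻ y, ((‖(starRingEnd ℂ) (ψ x) * K (x, y) *
      ((g₀ (R⁻¹ • y) - g₀ (R⁻¹ • x) : ℝ) : ℂ) * ((1 / ‖y‖ : ℝ) : ℂ) * φ y‖₊ : ℝ≥0∞))
      ≤ ENNReal.ofReal c' * (D * eLpNorm ψ 2 volume * eLpNorm φ 2 volume) := by
    calc ∫⁻ x, ∫⁻ y, ((‖(starRingEnd ℂ) (ψ x) * K (x, y) *
        ((g₀ (R⁻¹ • y) - g₀ (R⁻¹ • x) : ℝ) : ℂ) * ((1 / ‖y‖ : ℝ) : ℂ) * φ y‖₊ : ℝ≥0∞))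
        ≤ ∫⁻ x, ∫⁻ y, ENNReal.ofReal c' * (f x *
            ((‖x - y‖₊ : ℝ≥0∞) ^ (-(2:ℝ)) * (‖y‖₊ : ℝ≥0∞) ^ (-(1:ℝ))) * g y) :=
          lintegral_mono fun x => lintegral_mono fun y => hpt x y
      _ = ENNReal.ofReal c' * ∫⁻ x, ∫⁻ y, (f x *
            ((‖x - y‖₊ : ℝ≥0∞) ^ (-(2:ℝ)) * (‖y‖₊ : ℝ≥0∞) ^ (-(1:ℝ))) * g y) := by
          rw [← lintegral_const_mul' _ _ ENNReal.ofReal_ne_top]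
          exact lintegral_congr fun x =>
            lintegral_const_mul' _ _ ENNReal.ofReal_ne_top
      _ ≤ ENNReal.ofReal c' * (D * (∫⁻ x, f x ^ (2:ℝ)) ^ ((1:ℝ)/2) *
            (∫⁻ y, g y ^ (2:ℝ)) ^ ((1:ℝ)/2)) :=
          mul_le_mul_right (hD f g hf hgm) _
      _ = ENNReal.ofReal c' * (D * eLpNorm ψ 2 volume * eLpNorm φ 2 volume) := by
          rw [hSψ, hSφ]
  have hfin : ENNReal.ofReal c' * (D * eLpNorm ψ 2 volume * eLpNorm φ 2 volume) ≠ ⊤ :=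
    ENNReal.mul_ne_top ENNReal.ofReal_ne_top
      (ENNReal.mul_ne_top (ENNReal.mul_ne_top hDt hψ.2.ne) hφ2.2.ne)
  calc ‖∫ x, ∫ y, (starRingEnd ℂ) (ψ x) * K (x, y) *
        ((g₀ (R⁻¹ • y) - g₀ (R⁻¹ • x) : ℝ) : ℂ) * ((1 / ‖y‖ : ℝ) : ℂ) * φ y‖
      ≤ (∫⁻ x, ENNReal.ofReal ‖∫ y, (starRingEnd ℂ) (ψ x) * K (x, y) *
          ((g₀ (R⁻¹ • y) - g₀ (R⁻¹ • x) : ℝ) : ℂ) * ((1 / ‖y‖ : ℝ) : ℂ) * φ y‖).toReal :=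
        norm_integral_le_lintegral_norm _
    _ ≤ (ENNReal.ofReal c' * (D * eLpNorm ψ 2 volume * eLpNorm φ 2 volume)).toReal := by
        apply ENNReal.toReal_mono hfin
        refine le_trans ?_ key
        refine lintegral_mono fun x => ?_
        rw [ofReal_norm_eq_coe_nnnorm]
        exact enorm_integral_le_lintegral_enorm _
    _ = c' * (D.toReal * (eLpNorm ψ 2 volume).toReal * (eLpNorm φ 2 volume).toReal) := by
        rw [ENNReal.toReal_mul, ENNReal.toReal_mul, ENNReal.toReal_mul,
          ENNReal.toReal_ofReal hc'0]
    _ = c₀ * (c₁ : ℝ) * D.toReal / R * (eLpNorm ψ 2 volume).toReal *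
          (eLpNorm φ 2 volume).toReal := by
        rw [hc']
        ring
end
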